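/- Let A = (Σ₊₁, Σ₀, Σ₋₁, Q, Q₀, Γ, ⟨δ_a⟩_{a∈Σ}, F) be a nondeterministic event-clock input-driven pushdown automaton, let Ψ₀ be the set of atomic stack prediction constraints (those referring to the stack prediction clock ▷s) used in its transitions, and let Ψ be the set of all other atomic constraints used in its transitions. Then there exists a deterministic event-clock input-driven pushdown automaton B with set of states Q' = 2^{Q×Q} × 2^Q and pushdown alphabet Γ' = 2^{Q×Q} × 2^Q × Σ₊₁ × 2^{Ψ}, which never uses the stack prediction clock ▷s in any of its clock constraints, and which recognizes the same set of timed strings as A. -/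

import Mathlib

/-- Classification of input symbols: left brackets (calls), right brackets
(returns) and neutral (internal) symbols. -/
inductive SymbolKind : Type
  | call | ret | int
  deriving DecidableEq

/-- The event clocks over an alphabet `A`: symbol history clocks `◁a`,
symbol prediction clocks `▷a`, the stack history clock `◁s` and the
stack prediction clock `▷s`. -/
inductive Clock (A : Type) : Type
  | histS (a : A)
  | predS (a : A)
  | histStack
  | predStack

/-- Clock constraints: Boolean combinations of atomic constraints
`C ≤ τ` and `C ≥ τ` (with a trivial constraint `tt`). -/
inductive ClockConstraint (A : Type) : Type
  | tt
  | le (C : Clock A) (τ : ℝ)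
  | ge (C : Clock A) (τ : ℝ)
  | and (φ ψ : ClockConstraint A)
  | or (φ ψ : ClockConstraint A)
  | not (φ : ClockConstraint A)

/-- The atomic constraints occurring in a clock constraint. -/
def ClockConstraint.atoms {A : Type} : ClockConstraint A → Set (ClockConstraint A)
  | .tt => ∅
  | .le C τ => {ClockConstraint.le C τ}
  | .ge C τ => {ClockConstraint.ge C τ}
  | .and φ ψ => φ.atoms ∪ ψ.atoms
  | .or φ ψ => φ.atoms ∪ ψ.atoms
  | .not φ => φ.atoms

/-- The clocks referred to by a clock constraint. -/
def ClockConstraint.clocks {A : Type} : ClockConstraint A → Set (Clock A)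
  | .tt => ∅
  | .le C _ => {C}
  | .ge C _ => {C}
  | .and φ ψ => φ.clocks ∪ ψ.clocks
  | .or φ ψ => φ.clocks ∪ ψ.clocks
  | .not φ => φ.clocks

/-- A timed string: the (real) time stamps are strictly increasing. -/
def IsTimed {A : Type} (w : List (A × ℝ)) : Prop :=
  (w.map Prod.snd).Chain' (· < ·)

/-- Well-nested (balanced) strings: every bracket is matched inside. -/
inductive WellNested {A : Type} (lab : A → SymbolKind) : List A → Prop
  | nil : WellNested lab []
  | int {a : A} {u : List A} :
      lab a = SymbolKind.int → WellNested lab u → WellNested lab (a :: u)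
  | wrap {a b : A} {u v : List A} :
      lab a = SymbolKind.call → lab b = SymbolKind.ret →
      WellNested lab u → WellNested lab v → WellNested lab (a :: u ++ b :: v)

/-- Position `j` holds a left bracket matched by the right bracket at
position `i`: the interior is well-nested. -/
def Matches {A : Type} (lab : A → SymbolKind) (w : List (A × ℝ)) (j i : ℕ) : Prop :=
  j < i ∧ i < w.length ∧
  (∃ p : A × ℝ, w[j]? = some p ∧ lab p.1 = SymbolKind.call) ∧
  (∃ p : A × ℝ, w[i]? = some p ∧ lab p.1 = SymbolKind.ret) ∧
  WellNested lab (((w.map Prod.fst).drop (j + 1)).take (i - j - 1))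

/-- `ClockVal lab w i C v` : the clock `C` is defined at position `i`
of the timed string `w` and has value `v`. -/
def ClockVal {A : Type} (lab : A → SymbolKind) (w : List (A × ℝ)) (i : ℕ) :
    Clock A → ℝ → Prop
  | .histS a, v => ∃ (pi pj : A × ℝ) (j : ℕ), w[i]? = some pi ∧ j < i ∧
      w[j]? = some pj ∧ pj.1 = a ∧
      (∀ (j' : ℕ) (p' : A × ℝ), j < j' → j' < i → w[j']? = some p' → p'.1 ≠ a) ∧
      v = pi.2 - pj.2
  | .predS a, v => ∃ (pi pj : A × ℝ) (j : ℕ), w[i]? = some pi ∧ i < j ∧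
      w[j]? = some pj ∧ pj.1 = a ∧
      (∀ (j' : ℕ) (p' : A × ℝ), i < j' → j' < j → w[j']? = some p' → p'.1 ≠ a) ∧
      v = pj.2 - pi.2
  | .histStack, v => ∃ (pi pj : A × ℝ) (j : ℕ), Matches lab w j i ∧
      w[i]? = some pi ∧ w[j]? = some pj ∧ v = pi.2 - pj.2
  | .predStack, v => ∃ (pi pj : A × ℝ) (j : ℕ), Matches lab w i j ∧
      w[i]? = some pi ∧ w[j]? = some pj ∧ v = pj.2 - pi.2

/-- Truth of a clock constraint at position `i` of the timed string `w`;
an atomic constraint is true only if the clock value is defined. -/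
def Sat {A : Type} (lab : A → SymbolKind) (w : List (A × ℝ)) (i : ℕ) :
    ClockConstraint A → Prop
  | .tt => True
  | .le C τ => ∃ v, ClockVal lab w i C v ∧ v ≤ τ
  | .ge C τ => ∃ v, ClockVal lab w i C v ∧ τ ≤ v
  | .and φ ψ => Sat lab w i φ ∧ Sat lab w i ψ
  | .or φ ψ => Sat lab w i φ ∨ Sat lab w i ψ
  | .not φ => ¬ Sat lab w i φ

/-- A nondeterministic event-clock input-driven pushdown automaton
(ECIDPDA) with states `Q` and stack alphabet `Γ`. -/
structure ECIDPDA (A Q Γ : Type) where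
  init : Set Q
  final : Set Q
  δint : A → Q → ClockConstraint A → Set Q
  δcall : A → Q → ClockConstraint A → Set (Q × Γ)
  δret : A → Option Γ → Q → ClockConstraint A → Set Q

/-- Configurations reachable after reading the first `i` symbols of the
timed string `w` (starting in an initial state with the empty stack);
each transition is guarded by a clock constraint which must be true at
the corresponding position. -/
inductive Reach {A Q Γ : Type} (lab : A → SymbolKind) (M : ECIDPDA A Q Γ)
    (w : List (A × ℝ)) : ℕ → Q × List Γ → Prop
  | start {q : Q} : q ∈ M.init → Reach lab M w 0 (q, [])
  | int {i : ℕ} {q q' : Q} {γ : List Γ} {p : A × ℝ} {φ : ClockConstraint A} :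
      Reach lab M w i (q, γ) → w[i]? = some p → lab p.1 = SymbolKind.int →
      Sat lab w i φ → q' ∈ M.δint p.1 q φ → Reach lab M w (i + 1) (q', γ)
  | call {i : ℕ} {q q' : Q} {γ : List Γ} {s : Γ} {p : A × ℝ} {φ : ClockConstraint A} :
      Reach lab M w i (q, γ) → w[i]? = some p → lab p.1 = SymbolKind.call →
      Sat lab w i φ → (q', s) ∈ M.δcall p.1 q φ → Reach lab M w (i + 1) (q', s :: γ)
  | ret {i : ℕ} {q q' : Q} {γ : List Γ} {s : Γ} {p : A × ℝ} {φ : ClockConstraint A} :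
      Reach lab M w i (q, s :: γ) → w[i]? = some p → lab p.1 = SymbolKind.ret →
      Sat lab w i φ → q' ∈ M.δret p.1 (some s) q φ → Reach lab M w (i + 1) (q', γ)
  | retEmpty {i : ℕ} {q q' : Q} {p : A × ℝ} {φ : ClockConstraint A} :
      Reach lab M w i (q, []) → w[i]? = some p → lab p.1 = SymbolKind.ret →
      Sat lab w i φ → q' ∈ M.δret p.1 none q φ → Reach lab M w (i + 1) (q', [])

/-- Acceptance: some computation reads the whole string and ends in an
accepting state, with any stack contents. -/
def ECIDPDA.Accepts {A Q Γ : Type} (lab : A → SymbolKind) (M : ECIDPDA A Q Γ)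
    (w : List (A × ℝ)) : Prop :=
  ∃ (q : Q) (γ : List Γ), Reach lab M w w.length (q, γ) ∧ q ∈ M.final

/-- The clock constraints actually used (guarding some transition). -/
def ECIDPDA.used {A Q Γ : Type} (M : ECIDPDA A Q Γ) : Set (ClockConstraint A) :=
  {φ | (∃ a q, (M.δint a q φ).Nonempty) ∨ (∃ a q, (M.δcall a q φ).Nonempty) ∨
       (∃ a s q, (M.δret a s q φ).Nonempty)}

/-- The set of atomic constraints occurring in the constraints used in
the transitions. -/
def ECIDPDA.atomicSet {A Q Γ : Type} (M : ECIDPDA A Q Γ) : Set (ClockConstraint A) :=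
  ⋃ φ ∈ M.used, φ.atoms

/-- Determinism: one initial state, at most one transition per clock
constraint, and distinct constraints guarding transitions from the same
state (and popped symbol) are never simultaneously true at any position
of any timed string. -/
def ECIDPDA.Deterministic {A Q Γ : Type} (lab : A → SymbolKind)
    (M : ECIDPDA A Q Γ) : Prop :=
  (∃ q₀ : Q, M.init = {q₀}) ∧
  (∀ a q φ, (M.δint a q φ).Subsingleton) ∧
  (∀ a q φ, (M.δcall a q φ).Subsingleton) ∧
  (∀ a s q φ, (M.δret a s q φ).Subsingleton) ∧
  (∀ a q φ φ', φ ≠ φ' → (M.δint a q φ).Nonempty → (M.δint a q φ').Nonempty →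
    ∀ (w : List (A × ℝ)) (i : ℕ), IsTimed w → i < w.length →
      ¬ (Sat lab w i φ ∧ Sat lab w i φ')) ∧
  (∀ a q φ φ', φ ≠ φ' → (M.δcall a q φ).Nonempty → (M.δcall a q φ').Nonempty →
    ∀ (w : List (A × ℝ)) (i : ℕ), IsTimed w → i < w.length →
      ¬ (Sat lab w i φ ∧ Sat lab w i φ')) ∧
  (∀ a s q φ φ', φ ≠ φ' → (M.δret a s q φ).Nonempty → (M.δret a s q φ').Nonempty →
    ∀ (w : List (A × ℝ)) (i : ℕ), IsTimed w → i < w.length →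
      ¬ (Sat lab w i φ ∧ Sat lab w i φ'))


/- ================================================================
   Auxiliary development for the determinization theorem.
   ================================================================ -/

namespace ECDet

open Classical

variable {A Q Γ : Type}

/-! ### Timing -/

theorem timed_lt {w : List (A × ℝ)} (ht : IsTimed w) {i j : ℕ} (hij : i < j)
    {p r : A × ℝ} (hp : w[i]? = some p) (hr : w[j]? = some r) : p.2 < r.2 := by
  have hi : i < w.length := by
    by_contra h
    simp [List.getElem?_eq_none (le_of_not_gt h)] at hp
  have hj : j < w.length := by
    by_contra h
    simp [List.getElem?_eq_none (le_of_not_gt h)] at hr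
  have := (List.isChain_iff_pairwise.mp ht)
  rw [List.pairwise_iff_getElem] at this
  have h2 := this i j (by simpa using hi) (by simpa using hj) hij
  rw [List.getElem?_eq_getElem hi] at hp
  rw [List.getElem?_eq_getElem hj] at hr
  simp only [List.getElem_map] at h2
  rw [Option.some_inj.mp hp, Option.some_inj.mp hr] at h2
  exact h2

/-! ### Generic evaluation of clock constraints -/

/-- Evaluate a constraint relative to an abstract clock-valuation. -/
def EvalC (cv : Clock A → ℝ → Prop) : ClockConstraint A → Prop
  | .tt => True
  | .le C τ => ∃ v, cv C v ∧ v ≤ τ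
  | .ge C τ => ∃ v, cv C v ∧ τ ≤ v
  | .and φ ψ => EvalC cv φ ∧ EvalC cv ψ
  | .or φ ψ => EvalC cv φ ∨ EvalC cv ψ
  | .not φ => ¬ EvalC cv φ

theorem Sat_eq_EvalC (lab : A → SymbolKind) (w : List (A × ℝ)) (i : ℕ)
    (φ : ClockConstraint A) : Sat lab w i φ ↔ EvalC (ClockVal lab w i) φ := by
  induction φ <;> simp [Sat, EvalC, *]

/-- Every element of `atoms` is a `le` or a `ge`. -/
theorem atoms_shape {φ ψ : ClockConstraint A} (h : ψ ∈ φ.atoms) :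
    (∃ C τ, ψ = .le C τ) ∨ (∃ C τ, ψ = .ge C τ) := by
  induction φ with
  | tt => simp [ClockConstraint.atoms] at h
  | le C τ => simp [ClockConstraint.atoms] at h; exact Or.inl ⟨C, τ, h⟩
  | ge C τ => simp [ClockConstraint.atoms] at h; exact Or.inr ⟨C, τ, h⟩
  | and φ₁ φ₂ ih₁ ih₂ =>
      rcases (by simpa [ClockConstraint.atoms] using h : _ ∨ _) with h | h
      exacts [ih₁ h, ih₂ h]
  | or φ₁ φ₂ ih₁ ih₂ =>
      rcases (by simpa [ClockConstraint.atoms] using h : _ ∨ _) with h | h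
      exacts [ih₁ h, ih₂ h]
  | not φ₁ ih => exact ih (by simpa [ClockConstraint.atoms] using h)

/-- Boolean evaluation from an assignment of truth values to atoms. -/
def evalW (f : ClockConstraint A → Prop) : ClockConstraint A → Prop
  | .tt => True
  | .le C τ => f (.le C τ)
  | .ge C τ => f (.ge C τ)
  | .and φ ψ => evalW f φ ∧ evalW f ψ
  | .or φ ψ => evalW f φ ∨ evalW f ψ
  | .not φ => ¬ evalW f φ

/-- If `f` agrees with `EvalC cv` on the atoms of `φ`, then `evalW f φ`
is the evaluation of `φ`. -/
theorem evalW_eq_EvalC {cv : Clock A → ℝ → Prop} {f : ClockConstraint A → Prop}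
    {φ : ClockConstraint A} (h : ∀ ψ ∈ φ.atoms, (f ψ ↔ EvalC cv ψ)) :
    evalW f φ ↔ EvalC cv φ := by
  induction φ with
  | tt => simp [evalW, EvalC]
  | le C τ => exact h _ (by simp [ClockConstraint.atoms])
  | ge C τ => exact h _ (by simp [ClockConstraint.atoms])
  | and φ₁ φ₂ ih₁ ih₂ =>
      simp only [evalW, EvalC]
      rw [ih₁ fun ψ hψ => h ψ (by simp [ClockConstraint.atoms, hψ]),
        ih₂ fun ψ hψ => h ψ (by simp [ClockConstraint.atoms, hψ])]
  | or φ₁ φ₂ ih₁ ih₂ =>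
      simp only [evalW, EvalC]
      rw [ih₁ fun ψ hψ => h ψ (by simp [ClockConstraint.atoms, hψ]),
        ih₂ fun ψ hψ => h ψ (by simp [ClockConstraint.atoms, hψ])]
  | not φ₁ ih =>
      simp only [evalW, EvalC]
      rw [ih fun ψ hψ => h ψ (by simpa [ClockConstraint.atoms] using hψ)]

/-- Two valuations that agree pointwise give the same evaluation. -/
theorem EvalC_congr {cv cv' : Clock A → ℝ → Prop}
    (h : ∀ C v, cv C v ↔ cv' C v) (φ : ClockConstraint A) :
    EvalC cv φ ↔ EvalC cv' φ := by
  induction φ <;> simp [EvalC, h, *]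


/-! ### The pending-call stack of a position -/

section Stack

variable (lab : A → SymbolKind) (w : List (A × ℝ))

/-- The kind of the symbol at position `m`. -/
def symK (m : ℕ) : Option SymbolKind := (w[m]?).map (fun p => lab p.1)

/-- The stack of pending (unmatched) call positions within `[x, m)`,
topmost (most recent) first. -/
def rstk (x : ℕ) : ℕ → List ℕ
  | 0 => []
  | m + 1 =>
      if m < x then [] else
      match symK lab w m with
      | some .call => m :: rstk x m
      | some .ret => (rstk x m).tail
      | _ => rstk x m

variable {lab} {w}

theorem rstk_succ_call {x m : ℕ} (hx : x ≤ m) (h : symK lab w m = some .call) :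
    rstk lab w x (m + 1) = m :: rstk lab w x m := by
  simp [rstk, Nat.not_lt.mpr hx, h]

theorem rstk_succ_ret {x m : ℕ} (hx : x ≤ m) (h : symK lab w m = some .ret) :
    rstk lab w x (m + 1) = (rstk lab w x m).tail := by
  simp [rstk, Nat.not_lt.mpr hx, h]

theorem rstk_succ_int {x m : ℕ} (hx : x ≤ m) (h : symK lab w m = some .int) :
    rstk lab w x (m + 1) = rstk lab w x m := by
  simp [rstk, Nat.not_lt.mpr hx, h]

theorem rstk_succ_none {x m : ℕ} (hx : x ≤ m) (h : symK lab w m = none) :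
    rstk lab w x (m + 1) = rstk lab w x m := by
  simp [rstk, Nat.not_lt.mpr hx, h]

theorem rstk_le {x m : ℕ} (h : m ≤ x) : rstk lab w x m = [] := by
  induction m with
  | zero => rfl
  | succ m ih => simp [rstk, Nat.lt_of_succ_le h]

theorem rstk_mem {x m c : ℕ} (h : c ∈ rstk lab w x m) :
    x ≤ c ∧ c < m ∧ symK lab w c = some .call := by
  induction m with
  | zero => simp [rstk] at h
  | succ m ih =>
      by_cases hx : m < x
      · simp [rstk, hx] at h
      · rw [rstk] at h
        rw [if_neg hx] at h
        rcases hk : symK lab w m with _ | k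
        · rw [hk] at h
          have := ih h
          exact ⟨this.1, by omega, this.2.2⟩
        · cases k <;> rw [hk] at h
          · -- call
            rcases List.mem_cons.mp h with rfl | h
            · exact ⟨Nat.le_of_not_gt hx, by omega, hk⟩
            · have := ih h; exact ⟨this.1, by omega, this.2.2⟩
          · -- ret
            have := ih (List.tail_subset _ h)
            exact ⟨this.1, by omega, this.2.2⟩
          · -- int
            have := ih h
            exact ⟨this.1, by omega, this.2.2⟩

theorem rstk_pairwise {x m : ℕ} : (rstk lab w x m).Pairwise (· > ·) := by
  induction m with
  | zero => simp [rstk]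
  | succ m ih =>
      by_cases hx : m < x
      · simp [rstk, hx]
      · rw [rstk, if_neg hx]
        rcases hk : symK lab w m with _ | k
        · exact ih
        · cases k
          · exact List.Pairwise.cons (fun c hc => (rstk_mem hc).2.1) ih
          · exact ih.tail
          · exact ih

theorem rstk_mem_succ {x m c : ℕ} (h : c ∈ rstk lab w x (m + 1)) :
    c ∈ rstk lab w x m ∨ c = m := by
  by_cases hx : m < x
  · simp [rstk, hx] at h
  · rw [rstk, if_neg hx] at h
    rcases hk : symK lab w m with _ | k
    · rw [hk] at h; exact Or.inl h
    · cases k <;> rw [hk] at h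
      · rcases List.mem_cons.mp h with rfl | h
        · exact Or.inr rfl
        · exact Or.inl h
      · exact Or.inl (List.tail_subset _ h)
      · exact Or.inl h

theorem rstk_mem_down {x m m' c : ℕ} (h : c ∈ rstk lab w x m') (h1 : m ≤ m')
    (h2 : c < m) : c ∈ rstk lab w x m := by
  induction m' with
  | zero => simp [rstk] at h
  | succ m' ih =>
      rcases Nat.eq_or_lt_of_le h1 with rfl | hlt
      · exact h
      · rcases rstk_mem_succ h with h | rfl
        · exact ih h (by omega)
        · have := (rstk_mem h).2.1; omega

theorem rstk_shift {x b : ℕ} (hxb : x ≤ b) (hb : rstk lab w x b = []) :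
    ∀ m, b ≤ m → rstk lab w b m = rstk lab w x m := by
  intro m hm
  induction m with
  | zero => rw [rstk, rstk]
  | succ m ih =>
      rcases Nat.eq_or_lt_of_le hm with h | hlt
      · rw [← h, hb, rstk_le (le_refl b)]
      · have hm' : b ≤ m := by omega
        have := ih hm'
        rw [rstk, rstk, if_neg (Nat.not_lt.mpr hm'), if_neg (Nat.not_lt.mpr (le_trans hxb hm')), this]

theorem rstk_split {x c M : ℕ} (hc : c ∈ rstk lab w x M) :
    ∀ m, c < m → m ≤ M →
      rstk lab w x m = rstk lab w (c + 1) m ++ c :: rstk lab w x c := by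
  obtain ⟨hxc, hcM, hcall⟩ := rstk_mem hc
  intro m hm
  induction m with
  | zero => omega
  | succ m ih =>
      intro hmM
      rcases Nat.eq_or_lt_of_le (Nat.succ_le_of_lt hm) with h | hlt
      · -- m + 1 = c + 1
        have : m = c := by omega
        subst this
        rw [rstk_succ_call hxc hcall, rstk_le (le_refl (m + 1))]
        simp
      · have hcm : c < m := by omega
        have hmM' : m ≤ M := by omega
        have IH := ih hcm hmM'
        have hcmem : c ∈ rstk lab w x (m + 1) := rstk_mem_down hc hmM (by omega)
        have hxm : x ≤ m := by omega
        have hcm1 : c + 1 ≤ m := hcm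
        rcases hk : symK lab w m with _ | k
        · rw [rstk_succ_none hxm hk, rstk_succ_none hcm1 hk, IH]
        · cases k
          · rw [rstk_succ_call hxm hk, rstk_succ_call hcm1 hk, IH]; rfl
          · -- ret
            rw [rstk_succ_ret hxm hk, rstk_succ_ret hcm1 hk, IH]
            rcases he : rstk lab w (c + 1) m with _ | ⟨y, t⟩
            · exfalso
              rw [rstk_succ_ret hxm hk, IH, he] at hcmem
              simp at hcmem
              exact absurd (rstk_mem hcmem).2.1 (lt_irrefl c)
            · simp
          · rw [rstk_succ_int hxm hk, rstk_succ_int hcm1 hk, IH]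

theorem rstk_split_ret {x c M m : ℕ} (hc : c ∈ rstk lab w x M) (h1 : c < m)
    (h2 : m < M) (hret : symK lab w m = some .ret) :
    rstk lab w (c + 1) m ≠ [] := by
  intro hnil
  obtain ⟨hxc, hcM, hcall⟩ := rstk_mem hc
  have hsplit := rstk_split hc m h1 (le_of_lt h2)
  rw [hnil] at hsplit
  simp at hsplit
  have : rstk lab w x (m + 1) = rstk lab w x c := by
    rw [rstk_succ_ret (by omega) hret, hsplit]; rfl
  have hcmem : c ∈ rstk lab w x (m + 1) := rstk_mem_down hc h2 (by omega)
  rw [this] at hcmem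
  exact absurd (rstk_mem hcmem).2.1 (lt_irrefl c)

/-- Structure of a nonempty pending stack: below the top everything is
the pending stack of the top call's position. -/
theorem rstk_head_struct {x m c : ℕ} {ps : List ℕ}
    (h : rstk lab w x m = c :: ps) :
    ps = rstk lab w x c ∧ rstk lab w (c + 1) m = [] := by
  have hc : c ∈ rstk lab w x m := by rw [h]; exact List.mem_cons_self
  obtain ⟨hxc, hcm, hcall⟩ := rstk_mem hc
  have hsplit := rstk_split hc m hcm (le_refl m)
  rw [h] at hsplit
  rcases he : rstk lab w (c + 1) m with _ | ⟨y, t⟩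
  · rw [he] at hsplit; simp at hsplit
    exact ⟨hsplit, rfl⟩
  · exfalso
    rw [he] at hsplit
    have hy : y ∈ rstk lab w (c + 1) m := by rw [he]; exact List.mem_cons_self
    have := (rstk_mem hy).1
    simp at hsplit
    omega

end Stack


/-! ### Well-nested segments and the pending stack -/

section WN

variable {lab : A → SymbolKind} {w : List (A × ℝ)}

/-- The word `w` carries the symbols `u` starting at position `i₀`. -/
def SegAt (w : List (A × ℝ)) (i₀ : ℕ) (u : List A) : Prop :=
  ∀ k (hk : k < u.length), (w.map Prod.fst)[i₀ + k]? = some u[k]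

theorem segAt_nil {i₀ : ℕ} : SegAt w i₀ ([] : List A) := by
  intro k hk; simp at hk

theorem segAt_cons {i₀ : ℕ} {a : A} {u : List A} :
    SegAt w i₀ (a :: u) ↔ (w.map Prod.fst)[i₀]? = some a ∧ SegAt w (i₀ + 1) u := by
  constructor
  · intro h
    refine ⟨by exact h 0 (Nat.succ_pos _), fun k hk => ?_⟩
    have := h (k + 1) (by simpa using hk)
    simpa [Nat.add_comm, Nat.add_assoc, Nat.add_left_comm] using this
  · rintro ⟨h0, h⟩ k hk
    cases k with
    | zero => simpa using h0
    | succ k =>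
        have := h k (by simpa using hk)
        simpa [Nat.add_comm, Nat.add_assoc, Nat.add_left_comm] using this

theorem segAt_append {i₀ : ℕ} {u v : List A} :
    SegAt w i₀ (u ++ v) ↔ SegAt w i₀ u ∧ SegAt w (i₀ + u.length) v := by
  induction u generalizing i₀ with
  | nil => simp [segAt_nil, SegAt]
  | cons a u ih =>
      rw [List.cons_append, segAt_cons, segAt_cons, ih, and_assoc,
        show i₀ + 1 + u.length = i₀ + (a :: u).length by simp; omega]

theorem symK_of_segAt {i₀ : ℕ} {a : A} (h : (w.map Prod.fst)[i₀]? = some a) :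
    symK lab w i₀ = some (lab a) := by
  rw [List.getElem?_map] at h
  rcases hw : w[i₀]? with _ | p
  · rw [hw] at h; simp at h
  · rw [hw] at h; simp at h
    simp [symK, hw, h]

/-- Reading a well-nested segment leaves the pending stack unchanged. -/
theorem wn_rstk {u : List A} (hu : WellNested lab u) :
    ∀ i₀ x, x ≤ i₀ → SegAt w i₀ u →
      rstk lab w x (i₀ + u.length) = rstk lab w x i₀ := by
  induction hu with
  | nil => intro i₀ x _ _; simp
  | @int a u ha _ ih =>
      intro i₀ x hx hseg
      rw [segAt_cons] at hseg
      have hsym : symK lab w i₀ = some .int := by rw [symK_of_segAt hseg.1, ha]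
      have : i₀ + (a :: u).length = (i₀ + 1) + u.length := by simp; omega
      rw [this, ih (i₀ + 1) x (by omega) hseg.2, rstk_succ_int hx hsym]
  | @wrap a b u v ha hb _ _ ihu ihv =>
      intro i₀ x hx hseg
      rw [List.cons_append, segAt_cons, segAt_append, segAt_cons] at hseg
      obtain ⟨h0, h1, h2, h3⟩ := hseg
      have hsyma : symK lab w i₀ = some .call := by rw [symK_of_segAt h0, ha]
      have hsymb : symK lab w (i₀ + 1 + u.length) = some .ret := by
        rw [symK_of_segAt h2, hb]
      have e1 : rstk lab w x (i₀ + 1) = i₀ :: rstk lab w x i₀ :=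
        rstk_succ_call hx hsyma
      have e2 : rstk lab w x (i₀ + 1 + u.length) = i₀ :: rstk lab w x i₀ := by
        rw [ihu (i₀ + 1) x (by omega) h1, e1]
      have e3 : rstk lab w x (i₀ + 1 + u.length + 1) = rstk lab w x i₀ := by
        rw [rstk_succ_ret (by omega) hsymb, e2, List.tail_cons]
      have e4 := ihv (i₀ + 1 + u.length + 1) x (by omega) h3
      rw [e3] at e4
      have : i₀ + (a :: u ++ b :: v).length = (i₀ + 1 + u.length + 1) + v.length := by
        simp; omega
      rw [this, e4]

theorem segAt_dropTake {i₀ L : ℕ} (h : i₀ + L ≤ w.length) :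
    SegAt w i₀ (((w.map Prod.fst).drop i₀).take L) := by
  intro k hk
  have hlen : ((w.map Prod.fst).drop i₀).length = w.length - i₀ := by simp
  have hkL : k < L := lt_of_lt_of_le hk (by simp [List.length_take])
  rw [List.getElem?_eq_getElem (by simp; omega)]
  congr 1
  rw [List.getElem_take, List.getElem_drop]

theorem matches_rstk {c i : ℕ} (h : Matches lab w c i) :
    ∀ x, x ≤ c → rstk lab w x i = c :: rstk lab w x c := by
  obtain ⟨hci, hilen, ⟨p, hp, hpc⟩, ⟨r, hr, hrr⟩, hwn⟩ := h
  intro x hx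
  have hsymc : symK lab w c = some .call := by simp [symK, hp, hpc]
  have hlen : (((w.map Prod.fst).drop (c + 1)).take (i - c - 1)).length = i - c - 1 := by
    simp [List.length_take, List.length_drop]
    omega
  have hseg : SegAt w (c + 1) (((w.map Prod.fst).drop (c + 1)).take (i - c - 1)) :=
    segAt_dropTake (by omega)
  have := wn_rstk hwn (c + 1) x (by omega) hseg
  rw [hlen] at this
  have harith : c + 1 + (i - c - 1) = i := by omega
  rw [harith] at this
  rw [this, rstk_succ_call (le_trans hx (by omega)) hsymc]

theorem matches_symK_ret {c i : ℕ} (h : Matches lab w c i) :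
    symK lab w i = some .ret := by
  obtain ⟨_, _, _, ⟨r, hr, hrr⟩, _⟩ := h
  simp [symK, hr, hrr]

theorem matches_unique_left {c c' i : ℕ} (h : Matches lab w c i)
    (h' : Matches lab w c' i) : c = c' := by
  have e1 := matches_rstk h 0 (Nat.zero_le _)
  have e2 := matches_rstk h' 0 (Nat.zero_le _)
  rw [e1] at e2
  exact (List.cons.injEq _ _ _ _ ▸ e2).1

theorem matches_unique_right {c i i' : ℕ} (h : Matches lab w c i)
    (h' : Matches lab w c i') : i = i' := by
  by_contra hne
  -- wlog i < i'
  wlog hlt : i < i' generalizing i i'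
  · exact this h' h (Ne.symm hne) (by omega)
  have e1 := matches_rstk h 0 (Nat.zero_le _)
  have hci : c < i := h.1
  have e2 : rstk lab w 0 (i + 1) = rstk lab w 0 c := by
    rw [rstk_succ_ret (by omega) (matches_symK_ret h), e1]; rfl
  have hc' : c ∈ rstk lab w 0 i' := by
    rw [matches_rstk h' 0 (Nat.zero_le _)]; exact List.mem_cons_self
  have := rstk_mem_down hc' (by omega : i + 1 ≤ i') (by omega)
  rw [e2] at this
  exact absurd (rstk_mem this).2.1 (lt_irrefl c)

end WN


/-! ### Constructing matches from the pending stack -/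

section Dyck

variable {lab : A → SymbolKind} {w : List (A × ℝ)}

theorem symK_eq_some {m : ℕ} {k : SymbolKind} :
    symK lab w m = some k ↔ ∃ p, w[m]? = some p ∧ lab p.1 = k := by
  rcases hw : w[m]? with _ | p <;> simp [symK, hw]

theorem take_cons_of_lt {α : Type*} {n : ℕ} (h : 0 < n) (a : α) (t : List α) :
    (a :: t).take n = a :: t.take (n - 1) := by
  cases n with
  | zero => omega
  | succ n => simp

/-- Dyck-style converse: if the relative pending stack returns to empty
and never bottoms out at a return, the segment is well-nested. -/
theorem wn_of_rstk : ∀ N x b, b = x + N → b ≤ w.length →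
    rstk lab w x b = [] →
    (∀ m, x ≤ m → m < b → symK lab w m = some .ret → rstk lab w x m ≠ []) →
    WellNested lab (((w.map Prod.fst).drop x).take (b - x)) := by
  intro N
  induction N using Nat.strong_induction_on with
  | _ N ih =>
    rcases N with _ | N
    · intro x b hb _ _ _
      subst hb
      simp
      exact WellNested.nil
    · intro x b hb hble hnil hne
      have hxb : x < b := by omega
      have hxlen : x < w.length := by omega
      set l := w.map Prod.fst with hl
      have hxl : x < l.length := by simpa [hl] using hxlen
      have hpx : w[x]? = some w[x] := List.getElem?_eq_getElem hxlen
      have hsymx : symK lab w x = some (lab w[x].1) := by simp [symK, hpx]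
      have hlx : l[x] = w[x].1 := by simp [hl]
      have hdx : l.drop x = l[x] :: l.drop (x + 1) := List.drop_eq_getElem_cons hxl
      rcases hkx : lab w[x].1 with _ | _ | _
      · -- call at x : find the matching return
        haveI : DecidablePred (fun m => x + 1 ≤ m ∧ x ∉ rstk lab w x m) :=
          fun _ => Classical.dec _
        have hex : ∃ m, x + 1 ≤ m ∧ x ∉ rstk lab w x m :=
          ⟨b, by omega, by rw [hnil]; simp⟩
        set r := Nat.find hex with hrdef
        obtain ⟨hr1, hr2⟩ := Nat.find_spec hex
        rw [← hrdef] at hr1 hr2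
        have hrb : r ≤ b := Nat.find_le ⟨by omega, by rw [hnil]; simp⟩
        have e1 : rstk lab w x (x + 1) = [x] := by
          rw [rstk_succ_call (le_refl x) (by rw [hsymx, hkx]), rstk_le (le_refl x)]
        have hrx2 : x + 2 ≤ r := by
          rcases Nat.lt_or_ge r (x + 2) with h | h
          · exfalso
            have : r = x + 1 := by omega
            rw [this, e1] at hr2
            simp at hr2
          · exact h
        have hmem : ∀ m, x + 1 ≤ m → m < r → x ∈ rstk lab w x m := by
          intro m hm1 hm2
          by_contra hcon
          exact Nat.find_min hex hm2 ⟨hm1, hcon⟩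
        have hmemr1 : x ∈ rstk lab w x (r - 1) := hmem _ (by omega) (by omega)
        have hr1len : r - 1 < w.length := by omega
        have hpr : w[r - 1]? = some w[r - 1] := List.getElem?_eq_getElem hr1len
        have hsymr : symK lab w (r - 1) = some (lab w[r - 1].1) := by
          simp [symK, hpr]
        have hre : r - 1 + 1 = r := by omega
        have hretr : lab w[r - 1].1 = SymbolKind.ret := by
          rcases hkr : lab w[r - 1].1 with _ | _ | _
          · exfalso
            apply hr2
            have : rstk lab w x r = (r - 1) :: rstk lab w x (r - 1) := by
              rw [← hre]
              exact rstk_succ_call (by omega) (by rw [hsymr, hkr])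
            rw [this]
            exact List.mem_cons_of_mem _ hmemr1
          · rfl
          · exfalso
            apply hr2
            have : rstk lab w x r = rstk lab w x (r - 1) := by
              rw [← hre]
              exact rstk_succ_int (by omega) (by rw [hsymr, hkr])
            rw [this]; exact hmemr1
        have hsymret : symK lab w (r - 1) = some .ret := by rw [hsymr, hretr]
        have hstep : rstk lab w x r = (rstk lab w x (r - 1)).tail := by
          rw [← hre]; exact rstk_succ_ret (by omega) hsymret
        have hsing : rstk lab w x (r - 1) = [x] := by
          rcases hc : rstk lab w x (r - 1) with _ | ⟨hd, tl⟩
          · rw [hc] at hmemr1; simp at hmemr1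
          · have hhx : hd = x := by
              by_contra hhx
              apply hr2
              rw [hstep, hc, List.tail_cons]
              rw [hc] at hmemr1
              rcases List.mem_cons.mp hmemr1 with h' | h'
              · exact absurd h'.symm hhx
              · exact h'
            have htl : tl = [] := by
              rcases ht : tl with _ | ⟨y, tl'⟩
              · rfl
              · exfalso
                have hy : y ∈ rstk lab w x (r - 1) := by
                  rw [hc, ht]; exact List.mem_cons_of_mem _ (List.mem_cons_self)
                have h1 := (rstk_mem hy).1
                have hpw := rstk_pairwise (lab := lab) (w := w) (x := x) (m := r - 1)
                rw [hc, ht, hhx] at hpw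
                have := (List.pairwise_cons.mp hpw).1 y (List.mem_cons_self)
                omega
            rw [hhx, htl]
        have e2 : rstk lab w x r = [] := by rw [hstep, hsing]; rfl
        have hsub : ∀ m, x + 1 ≤ m → m ≤ r - 1 →
            rstk lab w x m = rstk lab w (x + 1) m ++ [x] := by
          intro m hm1 hm2
          have := rstk_split (hc := hmemr1) m (by omega) hm2
          rw [rstk_le (le_refl x)] at this
          exact this
        have hint_nil : rstk lab w (x + 1) (r - 1) = [] := by
          have heq := hsub (r - 1) (by omega) (le_refl _)
          rw [hsing] at heq
          rcases he : rstk lab w (x + 1) (r - 1) with _ | ⟨a1, t1⟩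
          · rfl
          · exfalso
            rw [he] at heq
            have := congrArg List.length heq
            simp at this
        have hint_ne : ∀ m, x + 1 ≤ m → m < r - 1 → symK lab w m = some .ret →
            rstk lab w (x + 1) m ≠ [] := by
          intro m hm1 hm2 hmret hcon
          have hx1 : rstk lab w x m = [x] := by rw [hsub m hm1 (by omega), hcon]; rfl
          have : rstk lab w x (m + 1) = [] := by
            rw [rstk_succ_ret (by omega) hmret, hx1]; rfl
          exact Nat.find_min hex (show m + 1 < r by omega) ⟨by omega, by rw [this]; simp⟩
        have wu := ih (r - 1 - (x + 1)) (by omega) (x + 1) (r - 1) (by omega)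
          (by omega) hint_nil hint_ne
        have hshift := rstk_shift (show x ≤ r by omega) e2
        have wv := ih (b - r) (by omega) r b (by omega) hble
          (by rw [hshift b (by omega)]; exact hnil)
          (fun m hm1 hm2 hmret => by
            rw [hshift m hm1]; exact hne m (by omega) hm2 hmret)
        -- assemble
        have hrl : r - 1 < l.length := by simpa [hl] using hr1len
        have hdr : l.drop (r - 1) = l[r - 1] :: l.drop r := by
          rw [List.drop_eq_getElem_cons hrl, hre]
        have hlr : l[r - 1] = w[r - 1].1 := by simp [hl]
        have egoal : (l.drop x).take (b - x)
            = (l[x] :: (l.drop (x + 1)).take (r - 1 - (x + 1)))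
              ++ l[r - 1] :: (l.drop r).take (b - r) := by
          rw [hdx, take_cons_of_lt (by omega) _ _]
          rw [show b - x - 1 = (r - 1 - (x + 1)) + (1 + (b - r)) by omega]
          rw [List.take_add]
          rw [List.drop_drop]
          rw [show x + 1 + (r - 1 - (x + 1)) = r - 1 by omega]
          rw [hdr, take_cons_of_lt (by omega) _ _]
          rw [show 1 + (b - r) - 1 = b - r by omega]
          simp
        rw [egoal]
        exact WellNested.wrap (by rw [hlx, hkx]) (by rw [hlr, hretr]) wu wv
      · -- ret at x : contradiction
        exact absurd (rstk_le (le_refl x))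
          (hne x (le_refl x) hxb (by rw [hsymx, hkx]))
      · -- int at x
        have e0 : rstk lab w x (x + 1) = [] := by
          rw [rstk_succ_int (le_refl x) (by rw [hsymx, hkx]), rstk_le (le_refl x)]
        have hshift := rstk_shift (show x ≤ x + 1 by omega) e0
        have wu := ih N (by omega) (x + 1) b (by omega) hble
          (by rw [hshift b (by omega)]; exact hnil)
          (fun m hm1 hm2 hmret => by
            rw [hshift m hm1]; exact hne m (by omega) hm2 hmret)
        have egoal : (l.drop x).take (b - x)
            = l[x] :: (l.drop (x + 1)).take (b - (x + 1)) := by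
          rw [hdx, take_cons_of_lt (by omega) _ _,
            show b - x - 1 = b - (x + 1) by omega]
        rw [egoal]
        exact WellNested.int (by rw [hlx, hkx]) wu

/-- A return whose pending stack is nonempty matches its top. -/
theorem matches_of_rstk {c i : ℕ} {ps : List ℕ} (hlen : i < w.length)
    (hret : symK lab w i = some .ret) (h : rstk lab w 0 i = c :: ps) :
    Matches lab w c i := by
  obtain ⟨-, hnil⟩ := rstk_head_struct h
  have hc : c ∈ rstk lab w 0 i := by rw [h]; exact List.mem_cons_self
  obtain ⟨-, hci, hcall⟩ := rstk_mem hc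
  have hne : ∀ m, c + 1 ≤ m → m < i → symK lab w m = some .ret →
      rstk lab w (c + 1) m ≠ [] := fun m hm1 hm2 hmret =>
    rstk_split_ret hc (by omega) hm2 hmret
  have hwn := wn_of_rstk (i - (c + 1)) (c + 1) i (by omega) (by omega) hnil hne
  obtain ⟨p, hp, hpc⟩ := symK_eq_some.mp hcall
  obtain ⟨r, hr, hrr⟩ := symK_eq_some.mp hret
  refine ⟨hci, hlen, ⟨p, hp, hpc⟩, ⟨r, hr, hrr⟩, ?_⟩
  rw [show i - c - 1 = i - (c + 1) by omega]
  exact hwn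

/-- Matching in a truncated word. -/
theorem interior_take {n j i : ℕ} (hin : i ≤ n) :
    (((w.take n).map Prod.fst).drop (j + 1)).take (i - j - 1)
      = ((w.map Prod.fst).drop (j + 1)).take (i - j - 1) := by
  rw [List.map_take, List.drop_take, List.take_take]
  congr 1
  omega

theorem matches_take {n j i : ℕ} :
    Matches lab (w.take n) j i ↔ Matches lab w j i ∧ i < n := by
  constructor
  · rintro ⟨h1, h2, ⟨p, hp, hpc⟩, ⟨r, hr, hrc⟩, hwn⟩
    have hin : i < n ∧ i < w.length := by
      simp [List.length_take] at h2; omega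
    have hj : j < n := by omega
    rw [List.getElem?_take, if_pos hj] at hp
    rw [List.getElem?_take, if_pos hin.1] at hr
    rw [interior_take (le_of_lt hin.1)] at hwn
    exact ⟨⟨h1, hin.2, ⟨p, hp, hpc⟩, ⟨r, hr, hrc⟩, hwn⟩, hin.1⟩
  · rintro ⟨⟨h1, h2, ⟨p, hp, hpc⟩, ⟨r, hr, hrc⟩, hwn⟩, hin⟩
    refine ⟨h1, by simp [List.length_take]; omega, ⟨p, ?_, hpc⟩, ⟨r, ?_, hrc⟩, ?_⟩
    · rw [List.getElem?_take, if_pos (by omega : j < n)]; exact hp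
    · rw [List.getElem?_take, if_pos hin]; exact hr
    · rw [interior_take (le_of_lt hin)]; exact hwn

end Dyck


/-! ### Clock values: uniqueness, positivity, snapshots -/

section Clocks

variable {lab : A → SymbolKind} {w : List (A × ℝ)}

theorem clockVal_unique {i : ℕ} {C : Clock A} {v v' : ℝ}
    (h : ClockVal lab w i C v) (h' : ClockVal lab w i C v') : v = v' := by
  cases C with
  | histS a =>
      obtain ⟨pi, pj, j, hpi, hj, hpj, hja, hmax, rfl⟩ := h
      obtain ⟨pi', pj', j', hpi', hj', hpj', hja', hmax', rfl⟩ := h'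
      rw [hpi] at hpi'
      obtain rfl : pi = pi' := Option.some.inj hpi'
      have hjj : j = j' := by
        rcases Nat.lt_trichotomy j j' with h | h | h
        · exact absurd hja' (hmax j' pj' h hj' hpj')
        · exact h
        · exact absurd hja (hmax' j pj h hj hpj)
      subst hjj
      rw [hpj] at hpj'
      obtain rfl : pj = pj' := Option.some.inj hpj'
      rfl
  | predS a =>
      obtain ⟨pi, pj, j, hpi, hj, hpj, hja, hmax, rfl⟩ := h
      obtain ⟨pi', pj', j', hpi', hj', hpj', hja', hmax', rfl⟩ := h'
      rw [hpi] at hpi'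
      obtain rfl : pi = pi' := Option.some.inj hpi'
      have hjj : j = j' := by
        rcases Nat.lt_trichotomy j j' with h | h | h
        · exact absurd hja (hmax' j pj hj h hpj)
        · exact h
        · exact absurd hja' (hmax j' pj' hj' h hpj')
      subst hjj
      rw [hpj] at hpj'
      obtain rfl : pj = pj' := Option.some.inj hpj'
      rfl
  | histStack =>
      obtain ⟨pi, pj, j, hm, hpi, hpj, rfl⟩ := h
      obtain ⟨pi', pj', j', hm', hpi', hpj', rfl⟩ := h'
      obtain rfl : j = j' := matches_unique_left hm hm'
      rw [hpi] at hpi'; rw [hpj] at hpj'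
      obtain rfl : pi = pi' := Option.some.inj hpi'
      obtain rfl : pj = pj' := Option.some.inj hpj'
      rfl
  | predStack =>
      obtain ⟨pi, pj, j, hm, hpi, hpj, rfl⟩ := h
      obtain ⟨pi', pj', j', hm', hpi', hpj', rfl⟩ := h'
      obtain rfl : j = j' := matches_unique_right hm hm'
      rw [hpi] at hpi'; rw [hpj] at hpj'
      obtain rfl : pi = pi' := Option.some.inj hpi'
      obtain rfl : pj = pj' := Option.some.inj hpj'
      rfl

theorem clockVal_nonneg {i : ℕ} {C : Clock A} {v : ℝ} (ht : IsTimed w)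
    (h : ClockVal lab w i C v) : 0 ≤ v := by
  cases C with
  | histS a =>
      obtain ⟨pi, pj, j, hpi, hj, hpj, _, _, rfl⟩ := h
      have := timed_lt ht hj hpj hpi; linarith
  | predS a =>
      obtain ⟨pi, pj, j, hpi, hj, hpj, _, _, rfl⟩ := h
      have := timed_lt ht hj hpi hpj; linarith
  | histStack =>
      obtain ⟨pi, pj, j, hm, hpi, hpj, rfl⟩ := h
      have := timed_lt ht hm.1 hpj hpi; linarith
  | predStack =>
      obtain ⟨pi, pj, j, hm, hpi, hpj, rfl⟩ := h
      have := timed_lt ht hm.1 hpi hpj; linarith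

theorem isTimed_take {n : ℕ} (ht : IsTimed w) : IsTimed (w.take n) := by
  unfold IsTimed at *
  rw [List.map_take]
  exact ht.take n

/-- The modified clock valuation: the stack prediction clock is
evaluated in the length-`n` prefix, all other clocks in `w` itself. -/
def MCV (lab : A → SymbolKind) (w : List (A × ℝ)) (n i : ℕ) :
    Clock A → ℝ → Prop
  | .predStack, v => ClockVal lab (w.take n) i .predStack v
  | C, v => ClockVal lab w i C v

theorem mcv_ne_predStack {n i : ℕ} {C : Clock A} (h : C ≠ Clock.predStack)
    {v : ℝ} : MCV lab w n i C v ↔ ClockVal lab w i C v := by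
  cases C <;> simp [MCV] at h ⊢

theorem mcv_predStack {n i : ℕ} {v : ℝ} :
    MCV lab w n i Clock.predStack v ↔ ClockVal lab (w.take n) i Clock.predStack v :=
  Iff.rfl

theorem mcv_unique {n i : ℕ} {C : Clock A} {v v' : ℝ}
    (h : MCV lab w n i C v) (h' : MCV lab w n i C v') : v = v' := by
  cases C <;>
    exact clockVal_unique (by simpa [MCV] using h) (by simpa [MCV] using h')

theorem mcv_nonneg {n i : ℕ} {C : Clock A} {v : ℝ} (ht : IsTimed w)
    (h : MCV lab w n i C v) : 0 ≤ v := by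
  cases C <;>
    first
      | exact clockVal_nonneg (isTimed_take ht) (by simpa [MCV] using h)
      | exact clockVal_nonneg ht (by simpa [MCV] using h)

/-- The modified satisfaction relation: stack prediction measured in the
length-`n` prefix. -/
def MSat (lab : A → SymbolKind) (w : List (A × ℝ)) (n i : ℕ)
    (φ : ClockConstraint A) : Prop := EvalC (MCV lab w n i) φ

theorem msat_length_eq_sat {i : ℕ} {φ : ClockConstraint A} :
    MSat lab w w.length i φ ↔ Sat lab w i φ := by
  rw [MSat, Sat_eq_EvalC]
  apply EvalC_congr
  intro C v
  cases C <;> simp [MCV]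

/-- Unpacking the stack-prediction clock of a prefix. -/
theorem clockVal_predStack_take {n i : ℕ} {v : ℝ} :
    ClockVal lab (w.take n) i Clock.predStack v ↔
      ∃ j p r, Matches lab w i j ∧ j < n ∧ w[i]? = some p ∧ w[j]? = some r ∧
        v = r.2 - p.2 := by
  constructor
  · rintro ⟨pi, pj, j, hm, hpi, hpj, rfl⟩
    obtain ⟨hmw, hjn⟩ := matches_take.mp hm
    have hij : i < j := hmw.1
    rw [List.getElem?_take, if_pos (by omega : i < n)] at hpi
    rw [List.getElem?_take, if_pos hjn] at hpj
    exact ⟨j, pi, pj, hmw, hjn, hpi, hpj, rfl⟩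
  · rintro ⟨j, p, r, hmw, hjn, hp, hr, rfl⟩
    have hij : i < j := hmw.1
    refine ⟨p, r, j, matches_take.mpr ⟨hmw, hjn⟩, ?_, ?_, rfl⟩
    · rw [List.getElem?_take, if_pos (by omega : i < n)]; exact hp
    · rw [List.getElem?_take, if_pos hjn]; exact hr

/-- Viewpoint congruence: if no match of position `p` lies between the
two horizons, the modified valuation is unchanged. -/
theorem mcv_congr {n n' p : ℕ}
    (h : ∀ r, Matches lab w p r → (r < n ↔ r < n')) {C : Clock A} {v : ℝ} :
    MCV lab w n p C v ↔ MCV lab w n' p C v := by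
  cases C with
  | predStack =>
      rw [mcv_predStack, mcv_predStack, clockVal_predStack_take,
        clockVal_predStack_take]
      constructor
      · rintro ⟨j, pp, r, hm, hj, h1, h2, h3⟩
        exact ⟨j, pp, r, hm, (h j hm).mp hj, h1, h2, h3⟩
      · rintro ⟨j, pp, r, hm, hj, h1, h2, h3⟩
        exact ⟨j, pp, r, hm, (h j hm).mpr hj, h1, h2, h3⟩
  | _ => rfl

theorem msat_congr {n n' p : ℕ}
    (h : ∀ r, Matches lab w p r → (r < n ↔ r < n')) {φ : ClockConstraint A} :
    MSat lab w n p φ ↔ MSat lab w n' p φ :=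
  EvalC_congr (fun _ _ => mcv_congr h) φ

/-- At position `i`, horizon `i + 1`, the stack prediction clock is
undefined. -/
theorem mcv_predStack_succ {i : ℕ} {v : ℝ} :
    ¬ MCV lab w (i + 1) i Clock.predStack v := by
  intro h
  obtain ⟨j, _, _, hm, hj, -⟩ := clockVal_predStack_take.mp h
  have := hm.1
  omega

/-- No match of `p` occurs in `[c, i]` when `c` is the top pending call
at `i` and `p < c`. -/
theorem no_match_of_pend {p c r i : ℕ} {ps : List ℕ}
    (hpend : rstk lab w 0 i = c :: ps) (hp : p < c) (h1 : c ≤ r) (h2 : r ≤ i)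
    (hm : Matches lab w p r) : False := by
  have hc : c ∈ rstk lab w 0 i := by rw [hpend]; exact List.mem_cons_self
  obtain ⟨-, hci, hcall⟩ := rstk_mem hc
  rcases Nat.eq_or_lt_of_le h1 with rfl | hlt
  · rw [matches_symK_ret hm] at hcall
    simp at hcall
  · have e := matches_rstk hm 0 (Nat.zero_le _)
    have hcr : c ∈ rstk lab w 0 r := rstk_mem_down hc h2 hlt
    rw [e] at hcr
    rcases List.mem_cons.mp hcr with rfl | hcr
    · omega
    · exact absurd (rstk_mem hcr).2.1 (by omega)

theorem no_match_at_nonret {p i : ℕ} (h : symK lab w i ≠ some .ret)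
    (hm : Matches lab w p i) : False := h (matches_symK_ret hm)

theorem no_match_at_empty {p i : ℕ} (h : rstk lab w 0 i = [])
    (hm : Matches lab w p i) : False := by
  have := matches_rstk hm 0 (Nat.zero_le _)
  rw [h] at this
  simp at this

/-- Classical snapshot of all clock values at a position. -/
noncomputable def snapOf (lab : A → SymbolKind) (w : List (A × ℝ)) (i : ℕ)
    (C : Clock A) : Option ℝ :=
  if h : ∃ v, ClockVal lab w i C v then some h.choose else none

theorem snapOf_eq_some {i : ℕ} {C : Clock A} {v : ℝ} :
    snapOf lab w i C = some v ↔ ClockVal lab w i C v := by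
  unfold snapOf
  split
  · next h =>
      constructor
      · intro he
        obtain rfl : h.choose = v := by injection he
        exact h.choose_spec
      · intro hv
        rw [clockVal_unique h.choose_spec hv]
  · next h =>
      simp only [reduceCtorEq, false_iff]
      exact fun hv => h ⟨v, hv⟩

theorem snapOf_eq_none {i : ℕ} {C : Clock A} :
    snapOf lab w i C = none ↔ ¬ ∃ v, ClockVal lab w i C v := by
  unfold snapOf
  split <;> simp_all

end Clocks


/-! ### Snapshot constraints -/

section Snapshot

variable {lab : A → SymbolKind} {w : List (A × ℝ)}

theorem EvalC_congr_on {cv cv' : Clock A → ℝ → Prop} {φ : ClockConstraint A}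
    (h : ∀ C ∈ φ.clocks, ∀ v, cv C v ↔ cv' C v) :
    EvalC cv φ ↔ EvalC cv' φ := by
  induction φ with
  | tt => simp [EvalC]
  | le C τ => simp only [EvalC]; exact exists_congr fun v => and_congr_left' (h C (by simp [ClockConstraint.clocks]) v)
  | ge C τ => simp only [EvalC]; exact exists_congr fun v => and_congr_left' (h C (by simp [ClockConstraint.clocks]) v)
  | and φ ψ ihφ ihψ =>
      simp only [EvalC]
      rw [ihφ fun C hC v => h C (by simp [ClockConstraint.clocks, hC]) v,
        ihψ fun C hC v => h C (by simp [ClockConstraint.clocks, hC]) v]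
  | or φ ψ ihφ ihψ =>
      simp only [EvalC]
      rw [ihφ fun C hC v => h C (by simp [ClockConstraint.clocks, hC]) v,
        ihψ fun C hC v => h C (by simp [ClockConstraint.clocks, hC]) v]
  | not φ ih =>
      simp only [EvalC]
      rw [ih fun C hC v => h C (by simpa [ClockConstraint.clocks] using hC) v]

theorem msat_sat_of_nonpred {n i : ℕ} {φ : ClockConstraint A}
    (h : Clock.predStack ∉ φ.clocks) : MSat lab w n i φ ↔ Sat lab w i φ := by
  rw [MSat, Sat_eq_EvalC]
  exact EvalC_congr_on fun C hC v =>
    mcv_ne_predStack (fun he => h (he ▸ hC))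

noncomputable def alist (A : Type) [Finite A] : List A :=
  letI := Fintype.ofFinite A
  Finset.univ.toList

theorem mem_alist [Finite A] (a : A) : a ∈ alist A := by
  letI := Fintype.ofFinite A
  simp [alist]

noncomputable def clockList (A : Type) [Finite A] : List (Clock A) :=
  Clock.histStack :: ((alist A).map Clock.histS ++ (alist A).map Clock.predS)

theorem mem_clockList [Finite A] {C : Clock A} (h : C ≠ Clock.predStack) :
    C ∈ clockList A := by
  cases C with
  | histS a =>
      simp only [clockList, List.mem_cons, List.mem_append, List.mem_map]
      exact Or.inr (Or.inl ⟨a, mem_alist a, rfl⟩)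
  | predS a =>
      simp only [clockList, List.mem_cons, List.mem_append, List.mem_map]
      exact Or.inr (Or.inr ⟨a, mem_alist a, rfl⟩)
  | histStack => exact List.mem_cons_self
  | predStack => exact absurd rfl h

theorem clockList_ne_pred [Finite A] {C : Clock A} (h : C ∈ clockList A) :
    C ≠ Clock.predStack := by
  simp only [clockList, List.mem_cons, List.mem_append, List.mem_map] at h
  rcases h with rfl | ⟨a, -, rfl⟩ | ⟨a, -, rfl⟩ <;> simp

/-- The one-clock constraint pinning the value (or undefinedness) of a
clock. -/
def piece (C : Clock A) : Option ℝ → ClockConstraint A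
  | some v => .and (.le C v) (.ge C v)
  | none => .not (.ge C 0)

theorem piece_inj {C : Clock A} {o o' : Option ℝ} (h : piece C o = piece C o') :
    o = o' := by
  cases o <;> cases o' <;> simp_all [piece]

theorem piece_clocks {C : Clock A} {o : Option ℝ} {D : Clock A}
    (h : D ∈ (piece C o).clocks) : D = C := by
  cases o <;> simp_all [piece, ClockConstraint.clocks]

theorem sat_piece (ht : IsTimed w) {i : ℕ} {C : Clock A} {o : Option ℝ} :
    Sat lab w i (piece C o) ↔ snapOf lab w i C = o := by
  cases o with
  | some v =>
      simp only [piece, Sat]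
      constructor
      · rintro ⟨⟨v₁, hv₁, hle⟩, ⟨v₂, hv₂, hge⟩⟩
        have h12 : v₁ = v₂ := clockVal_unique hv₁ hv₂
        have hv : v₁ = v := le_antisymm hle (h12 ▸ hge)
        exact snapOf_eq_some.mpr (hv ▸ hv₁)
      · intro h
        have hv := snapOf_eq_some.mp h
        exact ⟨⟨v, hv, le_refl v⟩, ⟨v, hv, le_refl v⟩⟩
  | none =>
      simp only [piece, Sat]
      constructor
      · intro h
        rw [snapOf_eq_none]
        rintro ⟨v, hv⟩
        exact h ⟨v, hv, clockVal_nonneg ht hv⟩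
      · intro h
        rintro ⟨v, hv, -⟩
        exact (snapOf_eq_none.mp h) ⟨v, hv⟩

/-- The snapshot constraint of a (partial) clock valuation. -/
noncomputable def mkφ [Finite A] (σ : Clock A → Option ℝ) : ClockConstraint A :=
  (clockList A).foldr (fun C ψ => .and (piece C (σ C)) ψ) .tt

theorem foldr_piece_inj {σ σ' : Clock A → Option ℝ} :
    ∀ L : List (Clock A),
      L.foldr (fun C ψ => ClockConstraint.and (piece C (σ C)) ψ) ClockConstraint.tt
        = L.foldr (fun C ψ => ClockConstraint.and (piece C (σ' C)) ψ) ClockConstraint.tt →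
      ∀ C ∈ L, σ C = σ' C := by
  intro L
  induction L with
  | nil => intro _ C hC; simp at hC
  | cons D L ih =>
      intro h C hC
      simp only [List.foldr_cons, ClockConstraint.and.injEq] at h
      rcases List.mem_cons.mp hC with rfl | hC
      · exact piece_inj h.1
      · exact ih h.2 C hC

theorem mkφ_inj [Finite A] {σ σ' : Clock A → Option ℝ} (h : mkφ σ = mkφ σ') :
    ∀ C ∈ clockList A, σ C = σ' C :=
  foldr_piece_inj _ h

theorem sat_and {i : ℕ} {φ ψ : ClockConstraint A} :
    Sat lab w i (ClockConstraint.and φ ψ) ↔ (Sat lab w i φ ∧ Sat lab w i ψ) :=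
  Iff.rfl

theorem foldr_piece_congr {σ σ' : Clock A → Option ℝ} :
    ∀ L : List (Clock A), (∀ C ∈ L, σ C = σ' C) →
      L.foldr (fun C ψ => ClockConstraint.and (piece C (σ C)) ψ) ClockConstraint.tt
        = L.foldr (fun C ψ => ClockConstraint.and (piece C (σ' C)) ψ) ClockConstraint.tt := by
  intro L
  induction L with
  | nil => intro _; rfl
  | cons D L ih =>
      intro h
      simp only [List.foldr_cons]
      rw [h D (List.mem_cons_self), ih fun C hC => h C (List.mem_cons_of_mem _ hC)]

theorem mkφ_congr [Finite A] {σ σ' : Clock A → Option ℝ}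
    (h : ∀ C ∈ clockList A, σ C = σ' C) : mkφ σ = mkφ σ' :=
  foldr_piece_congr _ h

theorem sat_foldr (ht : IsTimed w) {i : ℕ} {σ : Clock A → Option ℝ} :
    ∀ L : List (Clock A),
      (Sat lab w i (L.foldr (fun C ψ => ClockConstraint.and (piece C (σ C)) ψ)
        ClockConstraint.tt) ↔ ∀ C ∈ L, σ C = snapOf lab w i C) := by
  intro L
  induction L with
  | nil => exact ⟨fun _ C hC => by simp at hC, fun _ => trivial⟩
  | cons D L ih =>
      simp only [List.foldr_cons]
      rw [sat_and, sat_piece ht, ih]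
      constructor
      · rintro ⟨h1, h2⟩ C hC
        rcases List.mem_cons.mp hC with rfl | hC
        · exact h1.symm
        · exact h2 C hC
      · intro h
        exact ⟨(h D (List.mem_cons_self)).symm,
          fun C hC => h C (List.mem_cons_of_mem _ hC)⟩

theorem sat_mkφ [Finite A] (ht : IsTimed w) {i : ℕ} {σ : Clock A → Option ℝ} :
    Sat lab w i (mkφ σ) ↔ ∀ C ∈ clockList A, σ C = snapOf lab w i C :=
  sat_foldr ht _

theorem mkφ_clocks [Finite A] {σ : Clock A → Option ℝ} :
    Clock.predStack ∉ (mkφ σ).clocks := by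
  unfold mkφ
  have : ∀ L : List (Clock A), (∀ C ∈ L, C ≠ Clock.predStack) →
      Clock.predStack ∉ (L.foldr (fun C ψ => ClockConstraint.and (piece C (σ C)) ψ)
        ClockConstraint.tt).clocks := by
    intro L
    induction L with
    | nil => intro _; simp [ClockConstraint.clocks]
    | cons D L ih =>
        intro hL
        simp only [List.foldr_cons, ClockConstraint.clocks, Set.mem_union, not_or]
        refine ⟨fun hc => ?_, ih fun C hC => hL C (List.mem_cons_of_mem _ hC)⟩
        exact hL D (List.mem_cons_self) (piece_clocks hc).symm
  exact this _ fun C hC => clockList_ne_pred hC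

/-! ### Deciding guards from snapshots -/

/-- Truth of an atomic constraint under a snapshot, treating the stack
prediction clock as undefined. -/
def atomEval (σ : Clock A → Option ℝ) : ClockConstraint A → Prop
  | .le C τ => C ≠ Clock.predStack ∧ ∃ v, σ C = some v ∧ v ≤ τ
  | .ge C τ => C ≠ Clock.predStack ∧ ∃ v, σ C = some v ∧ τ ≤ v
  | _ => False

/-- Truth of a guard under a snapshot. -/
def satAt (σ : Clock A → Option ℝ) (φ : ClockConstraint A) : Prop :=
  evalW (atomEval σ) φ

/-- The fundamental bridge: when the stack prediction clock is undefined
at position `i` (horizon `n`), `satAt` of the actual snapshot computes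
modified satisfaction. -/
theorem satAt_msat {n i : ℕ}
    (hps : ∀ v, ¬ MCV lab w n i Clock.predStack v) (φ : ClockConstraint A) :
    satAt (snapOf lab w i) φ ↔ MSat lab w n i φ := by
  unfold satAt MSat
  apply evalW_eq_EvalC
  intro ψ hψ
  rcases atoms_shape hψ with ⟨C, τ, rfl⟩ | ⟨C, τ, rfl⟩
  · by_cases hC : C = Clock.predStack
    · subst hC
      simp only [atomEval, EvalC, ne_eq, not_true_eq_false, false_and, false_iff]
      rintro ⟨v, hv, -⟩
      exact hps v hv
    · simp only [atomEval, EvalC, ne_eq, hC, not_false_eq_true, true_and]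
      exact exists_congr fun v => and_congr_left' (by rw [snapOf_eq_some, mcv_ne_predStack hC])
  · by_cases hC : C = Clock.predStack
    · subst hC
      simp only [atomEval, EvalC, ne_eq, not_true_eq_false, false_and, false_iff]
      rintro ⟨v, hv, -⟩
      exact hps v hv
    · simp only [atomEval, EvalC, ne_eq, hC, not_false_eq_true, true_and]
      exact exists_congr fun v => and_congr_left' (by rw [snapOf_eq_some, mcv_ne_predStack hC])

/-- Snapshot truth of a non-stack-prediction atom is its actual truth. -/
theorem atomEval_snap_iff_sat {i : ℕ} {ψ : ClockConstraint A}
    (hsh : (∃ C τ, ψ = .le C τ) ∨ (∃ C τ, ψ = .ge C τ))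
    (hnp : Clock.predStack ∉ ψ.clocks) :
    atomEval (snapOf lab w i) ψ ↔ Sat lab w i ψ := by
  rcases hsh with ⟨C, τ, rfl⟩ | ⟨C, τ, rfl⟩ <;>
  · have hC : C ≠ Clock.predStack := by
      intro h; exact hnp (by simp [ClockConstraint.clocks, h])
    simp only [atomEval, Sat, ne_eq, hC, not_false_eq_true, true_and]
    exact exists_congr fun v => and_congr_left' snapOf_eq_some

/-- `satAt` only depends on the snapshot through the listed clocks. -/
theorem satAt_congr [Finite A] {σ σ' : Clock A → Option ℝ}
    (h : ∀ C ∈ clockList A, σ C = σ' C) (φ : ClockConstraint A) :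
    satAt σ φ ↔ satAt σ' φ := by
  unfold satAt
  induction φ with
  | tt => simp [evalW]
  | le C τ =>
      simp only [evalW, atomEval]
      by_cases hC : C = Clock.predStack
      · simp [hC]
      · rw [h C (mem_clockList hC)]
  | ge C τ =>
      simp only [evalW, atomEval]
      by_cases hC : C = Clock.predStack
      · simp [hC]
      · rw [h C (mem_clockList hC)]
  | and φ ψ ihφ ihψ => simp only [evalW]; rw [ihφ, ihψ]
  | or φ ψ ihφ ihψ => simp only [evalW]; rw [ihφ, ihψ]
  | not φ ih => simp only [evalW]; rw [ih]

end Snapshot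


/-! ### Runs with a horizon -/

/-- Partial runs of `M` from position `a` in configuration `c₀`, with
guards evaluated by modified satisfaction at horizon `n`. -/
inductive MRun (lab : A → SymbolKind) (M : ECIDPDA A Q Γ) (w : List (A × ℝ))
    (n a : ℕ) (c₀ : Q × List Γ) : ℕ → Q × List Γ → Prop
  | refl : MRun lab M w n a c₀ a c₀
  | int {i : ℕ} {q q' : Q} {γ : List Γ} {p : A × ℝ} {φ : ClockConstraint A} :
      MRun lab M w n a c₀ i (q, γ) → w[i]? = some p →
      lab p.1 = SymbolKind.int → MSat lab w n i φ → q' ∈ M.δint p.1 q φ →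
      MRun lab M w n a c₀ (i + 1) (q', γ)
  | call {i : ℕ} {q q' : Q} {γ : List Γ} {s : Γ} {p : A × ℝ}
      {φ : ClockConstraint A} :
      MRun lab M w n a c₀ i (q, γ) → w[i]? = some p →
      lab p.1 = SymbolKind.call → MSat lab w n i φ → (q', s) ∈ M.δcall p.1 q φ →
      MRun lab M w n a c₀ (i + 1) (q', s :: γ)
  | ret {i : ℕ} {q q' : Q} {γ : List Γ} {s : Γ} {p : A × ℝ}
      {φ : ClockConstraint A} :
      MRun lab M w n a c₀ i (q, s :: γ) → w[i]? = some p →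
      lab p.1 = SymbolKind.ret → MSat lab w n i φ → q' ∈ M.δret p.1 (some s) q φ →
      MRun lab M w n a c₀ (i + 1) (q', γ)
  | retEmpty {i : ℕ} {q q' : Q} {p : A × ℝ} {φ : ClockConstraint A} :
      MRun lab M w n a c₀ i (q, []) → w[i]? = some p →
      lab p.1 = SymbolKind.ret → MSat lab w n i φ → q' ∈ M.δret p.1 none q φ →
      MRun lab M w n a c₀ (i + 1) (q', [])

section Runs

variable {lab : A → SymbolKind} {M : ECIDPDA A Q Γ} {w : List (A × ℝ)}

theorem mrun_le {n a b : ℕ} {c₀ c : Q × List Γ}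
    (h : MRun lab M w n a c₀ b c) : a ≤ b := by
  induction h with
  | refl => exact le_refl a
  | int _ _ _ _ _ ih => omega
  | call _ _ _ _ _ ih => omega
  | ret _ _ _ _ _ ih => omega
  | retEmpty _ _ _ _ _ ih => omega

theorem mrun_trans {n a b k : ℕ} {c₀ c₁ c₂ : Q × List Γ}
    (h1 : MRun lab M w n a c₀ b c₁) (h2 : MRun lab M w n b c₁ k c₂) :
    MRun lab M w n a c₀ k c₂ := by
  induction h2 with
  | refl => exact h1
  | int h hp hl hs hd ih => exact MRun.int ih hp hl hs hd
  | call h hp hl hs hd ih => exact MRun.call ih hp hl hs hd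
  | ret h hp hl hs hd ih => exact MRun.ret ih hp hl hs hd
  | retEmpty h hp hl hs hd ih => exact MRun.retEmpty ih hp hl hs hd

theorem mrun_split {n a k : ℕ} {c₀ c₂ : Q × List Γ}
    (h : MRun lab M w n a c₀ k c₂) :
    ∀ j, a ≤ j → j ≤ k → ∃ c₁, MRun lab M w n a c₀ j c₁ ∧ MRun lab M w n j c₁ k c₂ := by
  induction h with
  | refl =>
      intro j h1 h2
      obtain rfl : j = a := le_antisymm h2 h1
      exact ⟨c₀, MRun.refl, MRun.refl⟩
  | @int i q q' γ p φ h hp hl hs hd ih =>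
      intro j h1 h2
      rcases Nat.eq_or_lt_of_le h2 with rfl | hlt
      · exact ⟨_, MRun.int h hp hl hs hd, MRun.refl⟩
      · obtain ⟨c₁, hh1, hh2⟩ := ih j h1 (by omega)
        exact ⟨c₁, hh1, MRun.int hh2 hp hl hs hd⟩
  | @call i q q' γ s p φ h hp hl hs hd ih =>
      intro j h1 h2
      rcases Nat.eq_or_lt_of_le h2 with rfl | hlt
      · exact ⟨_, MRun.call h hp hl hs hd, MRun.refl⟩
      · obtain ⟨c₁, hh1, hh2⟩ := ih j h1 (by omega)
        exact ⟨c₁, hh1, MRun.call hh2 hp hl hs hd⟩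
  | @ret i q q' γ s p φ h hp hl hs hd ih =>
      intro j h1 h2
      rcases Nat.eq_or_lt_of_le h2 with rfl | hlt
      · exact ⟨_, MRun.ret h hp hl hs hd, MRun.refl⟩
      · obtain ⟨c₁, hh1, hh2⟩ := ih j h1 (by omega)
        exact ⟨c₁, hh1, MRun.ret hh2 hp hl hs hd⟩
  | @retEmpty i q q' p φ h hp hl hs hd ih =>
      intro j h1 h2
      rcases Nat.eq_or_lt_of_le h2 with rfl | hlt
      · exact ⟨_, MRun.retEmpty h hp hl hs hd, MRun.refl⟩
      · obtain ⟨c₁, hh1, hh2⟩ := ih j h1 (by omega)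
        exact ⟨c₁, hh1, MRun.retEmpty hh2 hp hl hs hd⟩

theorem mrun_view {n n' a b : ℕ} {c₀ c : Q × List Γ}
    (hview : ∀ p, a ≤ p → p < b → ∀ φ, MSat lab w n p φ ↔ MSat lab w n' p φ)
    (h : MRun lab M w n a c₀ b c) : MRun lab M w n' a c₀ b c := by
  induction h with
  | refl => exact MRun.refl
  | @int i q q' γ p φ h hp hl hs hd ih =>
      exact MRun.int
        (ih fun p h1 h2 φ => hview p h1 (by omega) φ)
        hp hl ((hview i (mrun_le h) (by omega) φ).mp hs) hd
  | @call i q q' γ s p φ h hp hl hs hd ih =>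
      exact MRun.call
        (ih fun p h1 h2 φ => hview p h1 (by omega) φ)
        hp hl ((hview i (mrun_le h) (by omega) φ).mp hs) hd
  | @ret i q q' γ s p φ h hp hl hs hd ih =>
      exact MRun.ret
        (ih fun p h1 h2 φ => hview p h1 (by omega) φ)
        hp hl ((hview i (mrun_le h) (by omega) φ).mp hs) hd
  | @retEmpty i q q' p φ h hp hl hs hd ih =>
      exact MRun.retEmpty
        (ih fun p h1 h2 φ => hview p h1 (by omega) φ)
        hp hl ((hview i (mrun_le h) (by omega) φ).mp hs) hd

theorem symK_of_pos {i : ℕ} {p : A × ℝ} {k : SymbolKind} (hp : w[i]? = some p)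
    (hl : lab p.1 = k) : symK lab w i = some k := by
  simp [symK, hp, hl]

/-- The stack height of a run from the empty stack is the relative
pending-stack height. -/
theorem mrun_height {n a b : ℕ} {q₀ : Q} {c : Q × List Γ}
    (h : MRun lab M w n a (q₀, []) b c) :
    c.2.length = (rstk lab w a b).length := by
  induction h with
  | refl => simp [rstk_le (le_refl a)]
  | @int i q q' γ p φ h hp hl hs hd ih =>
      rw [rstk_succ_int (mrun_le h) (symK_of_pos hp hl)]; exact ih
  | @call i q q' γ s p φ h hp hl hs hd ih =>
      rw [rstk_succ_call (mrun_le h) (symK_of_pos hp hl)]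
      simpa using ih
  | @ret i q q' γ s p φ h hp hl hs hd ih =>
      rw [rstk_succ_ret (mrun_le h) (symK_of_pos hp hl)]
      rw [List.length_tail, ← ih]
      simp
  | @retEmpty i q q' p φ h hp hl hs hd ih =>
      rw [rstk_succ_ret (mrun_le h) (symK_of_pos hp hl)]
      have : rstk lab w a i = [] :=
        List.eq_nil_of_length_eq_zero (by simpa using ih.symm)
      rw [this]
      simpa using ih

/-- Projecting a run to the run over the relative stack, in a segment
where returns never bottom out. -/
theorem mrun_proj {n a b : ℕ} {q : Q} {γ₀ : List Γ} {c : Q × List Γ}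
    (h : MRun lab M w n a (q, γ₀) b c)
    (hne : ∀ m, a ≤ m → m < b → symK lab w m = some .ret → rstk lab w a m ≠ []) :
    ∃ τ : List Γ, c.2 = τ ++ γ₀ ∧ τ.length = (rstk lab w a b).length ∧
      MRun lab M w n a (q, []) b (c.1, τ) := by
  induction h with
  | refl => exact ⟨[], rfl, by simp [rstk_le (le_refl a)], MRun.refl⟩
  | @int i q1 q1' γ p φ h hp hl hs hd ih =>
      obtain ⟨τ, he, hlen, hr⟩ := ih fun m h1 h2 => hne m h1 (by omega)
      exact ⟨τ, he, by rw [rstk_succ_int (mrun_le h) (symK_of_pos hp hl)]; exact hlen,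
        MRun.int hr hp hl hs hd⟩
  | @call i q1 q1' γ s p φ h hp hl hs hd ih =>
      obtain ⟨τ, he, hlen, hr⟩ := ih fun m h1 h2 => hne m h1 (by omega)
      refine ⟨s :: τ, by simp only [List.cons_append]; rw [← he], ?_,
        MRun.call hr hp hl hs hd⟩
      rw [rstk_succ_call (mrun_le h) (symK_of_pos hp hl)]
      simpa using hlen
  | @ret i q1 q1' γ s p φ h hp hl hs hd ih =>
      obtain ⟨τ, he, hlen, hr⟩ := ih fun m h1 h2 => hne m h1 (by omega)
      have hnei : rstk lab w a i ≠ [] :=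
        hne i (mrun_le h) (by omega) (symK_of_pos hp hl)
      rcases hτ : τ with _ | ⟨t0, τ'⟩
      · exfalso
        rw [hτ] at hlen
        exact hnei (List.eq_nil_of_length_eq_zero (by simpa using hlen.symm))
      · rw [hτ] at he
        simp only [List.cons_append, List.cons.injEq] at he
        obtain ⟨he1, he2⟩ := he
        rw [hτ] at hr
        rw [← he1] at hr
        refine ⟨τ', he2, ?_, MRun.ret hr hp hl hs hd⟩
        rw [rstk_succ_ret (mrun_le h) (symK_of_pos hp hl), List.length_tail]
        rw [hτ] at hlen
        simp at hlen
        omega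
  | @retEmpty i q1 q1' p φ h hp hl hs hd ih =>
      obtain ⟨τ, he, hlen, hr⟩ := ih fun m h1 h2 => hne m h1 (by omega)
      exfalso
      have hτ : τ = [] := by
        cases τ with
        | nil => rfl
        | cons t0 τ' => simp at he
      rw [hτ] at hlen
      exact hne i (mrun_le h) (by omega) (symK_of_pos hp hl)
        (List.eq_nil_of_length_eq_zero (by simpa using hlen.symm))

/-- Lifting a relative run onto a larger stack, in a segment where
returns never bottom out. -/
theorem mrun_lift {n a b : ℕ} {q : Q} {c : Q × List Γ}
    (h : MRun lab M w n a (q, []) b c)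
    (hne : ∀ m, a ≤ m → m < b → symK lab w m = some .ret → rstk lab w a m ≠ []) :
    ∀ γ₀ : List Γ, MRun lab M w n a (q, γ₀) b (c.1, c.2 ++ γ₀) := by
  induction h with
  | refl => intro γ₀; exact MRun.refl
  | @int i q1 q1' γ p φ h hp hl hs hd ih =>
      intro γ₀
      exact MRun.int (ih (fun m h1 h2 => hne m h1 (by omega)) γ₀) hp hl hs hd
  | @call i q1 q1' γ s p φ h hp hl hs hd ih =>
      intro γ₀
      exact MRun.call (ih (fun m h1 h2 => hne m h1 (by omega)) γ₀) hp hl hs hd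
  | @ret i q1 q1' γ s p φ h hp hl hs hd ih =>
      intro γ₀
      exact MRun.ret (ih (fun m h1 h2 => hne m h1 (by omega)) γ₀) hp hl hs hd
  | @retEmpty i q1 q1' p φ h hp hl hs hd ih =>
      intro γ₀
      exfalso
      have := mrun_height h
      exact hne i (mrun_le h) (by omega) (symK_of_pos hp hl)
        (List.eq_nil_of_length_eq_zero (by simpa using this.symm))

end Runs


/-! ### Connecting `Reach` with `MRun` -/

section ReachMRun

variable {lab : A → SymbolKind} {M : ECIDPDA A Q Γ} {w : List (A × ℝ)}

theorem reach_iff_mrun {i : ℕ} {c : Q × List Γ} :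
    Reach lab M w i c ↔ ∃ q₀ ∈ M.init, MRun lab M w w.length 0 (q₀, []) i c := by
  constructor
  · intro h
    induction h with
    | @start q hq => exact ⟨q, hq, MRun.refl⟩
    | int h hp hl hs hd ih =>
        obtain ⟨q₀, hq₀, hr⟩ := ih
        exact ⟨q₀, hq₀, MRun.int hr hp hl (msat_length_eq_sat.mpr hs) hd⟩
    | call h hp hl hs hd ih =>
        obtain ⟨q₀, hq₀, hr⟩ := ih
        exact ⟨q₀, hq₀, MRun.call hr hp hl (msat_length_eq_sat.mpr hs) hd⟩
    | ret h hp hl hs hd ih =>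
        obtain ⟨q₀, hq₀, hr⟩ := ih
        exact ⟨q₀, hq₀, MRun.ret hr hp hl (msat_length_eq_sat.mpr hs) hd⟩
    | retEmpty h hp hl hs hd ih =>
        obtain ⟨q₀, hq₀, hr⟩ := ih
        exact ⟨q₀, hq₀, MRun.retEmpty hr hp hl (msat_length_eq_sat.mpr hs) hd⟩
  · rintro ⟨q₀, hq₀, hr⟩
    induction hr with
    | refl => exact Reach.start hq₀
    | int h hp hl hs hd ih => exact Reach.int ih hp hl (msat_length_eq_sat.mp hs) hd
    | call h hp hl hs hd ih => exact Reach.call ih hp hl (msat_length_eq_sat.mp hs) hd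
    | ret h hp hl hs hd ih => exact Reach.ret ih hp hl (msat_length_eq_sat.mp hs) hd
    | retEmpty h hp hl hs hd ih =>
        exact Reach.retEmpty ih hp hl (msat_length_eq_sat.mp hs) hd

end ReachMRun

/-! ### The deterministic automaton -/

section BDef

variable (M : ECIDPDA A Q Γ)

/-- One-symbol successor sets of `M` under snapshot `σ`. -/
def stepInt (σ : Clock A → Option ℝ) (a : A) (q : Q) : Set Q :=
  {q' | ∃ φ, satAt σ φ ∧ q' ∈ M.δint a q φ}

def stepCallQ (σ : Clock A → Option ℝ) (a : A) (q : Q) : Set Q :=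
  {q' | ∃ φ s, satAt σ φ ∧ (q', s) ∈ M.δcall a q φ}

def stepRetNone (σ : Clock A → Option ℝ) (a : A) (q : Q) : Set Q :=
  {q' | ∃ φ, satAt σ φ ∧ q' ∈ M.δret a none q φ}

variable (Ψ : Set (ClockConstraint A))

/-- Deferred truth of the atoms of a call guard: stored non-predictive
atoms, and stack prediction decided by the (now known) distance `vo` to
the matching return. -/
def callTruth (P : Set ↥Ψ) (vo : Option ℝ) (ψ : ClockConstraint A) : Prop :=
  (∃ h : ψ ∈ Ψ, (⟨ψ, h⟩ : ↥Ψ) ∈ P) ∨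
  (∃ τ v, vo = some v ∧
    ((ψ = ClockConstraint.le Clock.predStack τ ∧ v ≤ τ) ∨
     (ψ = ClockConstraint.ge Clock.predStack τ ∧ τ ≤ v)))

/-- Combined call–interior–return successor across a matched bracket. -/
def stepRetSome (σ : Clock A → Option ℝ) (aR bC : A) (P : Set ↥Ψ)
    (R : Set (Q × Q)) (q0 : Q) : Set Q :=
  {q₃ | ∃ φc q₁ s q₂ φr, evalW (callTruth Ψ P (σ Clock.histStack)) φc ∧
    (q₁, s) ∈ M.δcall bC q0 φc ∧ (q₁, q₂) ∈ R ∧ satAt σ φr ∧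
    q₃ ∈ M.δret aR (some s) q₂ φr}

def comp (R : Set (Q × Q)) (f : Q → Set Q) : Set (Q × Q) :=
  {pq | ∃ q, (pq.1, q) ∈ R ∧ pq.2 ∈ f q}

def img (S : Set Q) (f : Q → Set Q) : Set Q :=
  {q' | ∃ q ∈ S, q' ∈ f q}

def idQ (Q : Type) : Set (Q × Q) := {pq | pq.1 = pq.2}

variable (lab : A → SymbolKind) [Finite A]

/-- The deterministic automaton. -/
noncomputable def BAut : ECIDPDA A (Set (Q × Q) × Set Q)
    (Set (Q × Q) × Set Q × {a : A // lab a = SymbolKind.call} × Set ↥Ψ) where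
  init := {(idQ Q, M.init)}
  final := {RS | ∃ q ∈ RS.2, q ∈ M.final}
  δint := fun a RS φ =>
    {RS' | ∃ σ, φ = mkφ σ ∧
      RS' = (comp RS.1 (stepInt M σ a), img RS.2 (stepInt M σ a))}
  δcall := fun a RS φ =>
    {x | ∃ ha : lab a = SymbolKind.call, ∃ σ, φ = mkφ σ ∧
      x = ((idQ Q, img RS.2 (stepCallQ M σ a)),
        (RS.1, RS.2, ⟨a, ha⟩, {ψ : ↥Ψ | atomEval σ ψ.1}))}
  δret := fun a e RS φ =>
    match e with
    | none => {RS' | ∃ σ, φ = mkφ σ ∧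
        RS' = (comp RS.1 (stepRetNone M σ a), img RS.2 (stepRetNone M σ a))}
    | some e => {RS' | ∃ σ, φ = mkφ σ ∧
        RS' = (comp e.1 (stepRetSome M Ψ σ a e.2.2.1.1 e.2.2.2 RS.1),
          img e.2.1 (stepRetSome M Ψ σ a e.2.2.1.1 e.2.2.2 RS.1))}

end BDef

/-! ### Congruence of the step functions in the snapshot -/

section StepCongr

variable {M : ECIDPDA A Q Γ} {Ψ : Set (ClockConstraint A)} [Finite A]

theorem atomEval_congr {σ σ' : Clock A → Option ℝ}
    (h : ∀ C ∈ clockList A, σ C = σ' C) (ψ : ClockConstraint A) :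
    atomEval σ ψ ↔ atomEval σ' ψ := by
  cases ψ with
  | le C τ =>
      simp only [atomEval]
      by_cases hC : C = Clock.predStack
      · simp [hC]
      · rw [h C (mem_clockList hC)]
  | ge C τ =>
      simp only [atomEval]
      by_cases hC : C = Clock.predStack
      · simp [hC]
      · rw [h C (mem_clockList hC)]
  | tt => exact Iff.rfl
  | and φ ψ => exact Iff.rfl
  | or φ ψ => exact Iff.rfl
  | not φ => exact Iff.rfl

theorem stepInt_congr {σ σ' : Clock A → Option ℝ}
    (h : ∀ C ∈ clockList A, σ C = σ' C) (a : A) :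
    stepInt M σ a = stepInt M σ' a := by
  funext q
  ext q'
  unfold stepInt
  exact exists_congr fun φ => and_congr_left' (satAt_congr h φ)

theorem stepCallQ_congr {σ σ' : Clock A → Option ℝ}
    (h : ∀ C ∈ clockList A, σ C = σ' C) (a : A) :
    stepCallQ M σ a = stepCallQ M σ' a := by
  funext q
  ext q'
  unfold stepCallQ
  exact exists_congr fun φ => exists_congr fun s =>
    and_congr_left' (satAt_congr h φ)

theorem stepRetNone_congr {σ σ' : Clock A → Option ℝ}
    (h : ∀ C ∈ clockList A, σ C = σ' C) (a : A) :
    stepRetNone M σ a = stepRetNone M σ' a := by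
  funext q
  ext q'
  unfold stepRetNone
  exact exists_congr fun φ => and_congr_left' (satAt_congr h φ)

theorem stepRetSome_congr {σ σ' : Clock A → Option ℝ}
    (h : ∀ C ∈ clockList A, σ C = σ' C) (aR bC : A) (P : Set ↥Ψ)
    (R : Set (Q × Q)) :
    stepRetSome M Ψ σ aR bC P R = stepRetSome M Ψ σ' aR bC P R := by
  funext q0
  ext q₃
  unfold stepRetSome
  have hh : σ Clock.histStack = σ' Clock.histStack :=
    h _ (mem_clockList (by simp))
  rw [hh]
  constructor
  · rintro ⟨φc, q₁, s, q₂, φr, h1, h2, h3, h4, h5⟩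
    exact ⟨φc, q₁, s, q₂, φr, h1, h2, h3, (satAt_congr h φr).mp h4, h5⟩
  · rintro ⟨φc, q₁, s, q₂, φr, h1, h2, h3, h4, h5⟩
    exact ⟨φc, q₁, s, q₂, φr, h1, h2, h3, (satAt_congr h φr).mpr h4, h5⟩

theorem atomSet_congr {σ σ' : Clock A → Option ℝ}
    (h : ∀ C ∈ clockList A, σ C = σ' C) :
    {ψ : ↥Ψ | atomEval σ ψ.1} = {ψ : ↥Ψ | atomEval σ' ψ.1} := by
  ext ψ
  exact atomEval_congr h ψ.1

end StepCongr

/-! ### Semantic invariants of the construction -/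

section Semantics

variable (lab : A → SymbolKind) (M : ECIDPDA A Q Γ) (w : List (A × ℝ))
variable (Ψ : Set (ClockConstraint A))

/-- States reachable by `M` at position `i` (horizon `n`). -/
def Ssem (n i : ℕ) : Set Q :=
  {q | ∃ q₀ ∈ M.init, ∃ γ, MRun lab M w n 0 (q₀, []) i (q, γ)}

/-- Position just after the topmost pending call (or `0`). -/
def pbase (i : ℕ) : ℕ :=
  match rstk lab w 0 i with
  | [] => 0
  | c :: _ => c + 1

/-- The relation computed by `M` on the current segment. -/
def Rsem (n i : ℕ) : Set (Q × Q) :=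
  {pq | MRun lab M w n (pbase lab w i) (pq.1, []) i (pq.2, [])}

/-- Truth values of the stored atoms at a call position. -/
def Pat (c : ℕ) : Set ↥Ψ := {ψ | Sat lab w c ψ.1}

/-- Correctness of a pushed stack symbol for pending call position `c`. -/
def EntryOK (c : ℕ)
    (e : Set (Q × Q) × Set Q × {a : A // lab a = SymbolKind.call} × Set ↥Ψ) :
    Prop :=
  ∃ p, w[c]? = some p ∧ ∃ h : lab p.1 = SymbolKind.call,
    e = (Rsem lab M w c c, Ssem lab M w c c, ⟨p.1, h⟩, Pat lab w Ψ c)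

end Semantics


/-! ### Utilities for the simulation proof -/

section SimUtil

variable {lab : A → SymbolKind} {M : ECIDPDA A Q Γ} {w : List (A × ℝ)}
variable {Ψ : Set (ClockConstraint A)}

theorem mrun_same {n a b : ℕ} {c c' : Q × List Γ}
    (h : MRun lab M w n a c b c') (hb : b ≤ a) : c = c' := by
  cases h with
  | refl => rfl
  | int h _ _ _ _ => have := mrun_le h; omega
  | call h _ _ _ _ => have := mrun_le h; omega
  | ret h _ _ _ _ => have := mrun_le h; omega
  | retEmpty h _ _ _ _ => have := mrun_le h; omega

theorem msat_step_of_nomatch {n p' : ℕ} (hnm : ¬ Matches lab w p' n)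
    {φ : ClockConstraint A} :
    MSat lab w n p' φ ↔ MSat lab w (n + 1) p' φ :=
  msat_congr fun r hr => by
    constructor
    · intro h; omega
    · intro h
      rcases Nat.lt_or_ge r n with h' | h'
      · exact h'
      · exfalso
        obtain rfl : r = n := by omega
        exact hnm hr

theorem msat_call_to_pop {c i p' : ℕ} {ps : List ℕ}
    (hpend : rstk lab w 0 i = c :: ps) (hp : p' < c) {φ : ClockConstraint A} :
    MSat lab w c p' φ ↔ MSat lab w (i + 1) p' φ := by
  have hci : c < i := (rstk_mem (show c ∈ rstk lab w 0 i by
    rw [hpend]; exact List.mem_cons_self)).2.1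
  refine msat_congr fun r hr => ?_
  constructor
  · intro h; omega
  · intro h
    rcases Nat.lt_or_ge r c with h' | h'
    · exact h'
    · exact absurd hr (fun hm => no_match_of_pend hpend hp h' (by omega) hm)

theorem msat_succ_at_self {i : ℕ} {φ : ClockConstraint A} :
    MSat lab w (i + 1) i φ ↔ satAt (snapOf lab w i) φ :=
  (satAt_msat (fun v => mcv_predStack_succ) φ).symm

theorem pbase_nil {i : ℕ} (h : rstk lab w 0 i = []) : pbase lab w i = 0 := by
  simp [pbase, h]

theorem pbase_cons {i c : ℕ} {ps : List ℕ} (h : rstk lab w 0 i = c :: ps) :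
    pbase lab w i = c + 1 := by
  simp [pbase, h]

theorem pbase_le (i : ℕ) : pbase lab w i ≤ i := by
  rcases h : rstk lab w 0 i with _ | ⟨c, ps⟩
  · rw [pbase_nil h]; omega
  · rw [pbase_cons h]
    have : c ∈ rstk lab w 0 i := by rw [h]; exact List.mem_cons_self
    have := (rstk_mem this).2.1
    omega

theorem rstk_pbase (i : ℕ) : rstk lab w (pbase lab w i) i = [] := by
  rcases h : rstk lab w 0 i with _ | ⟨c, ps⟩
  · rw [pbase_nil h]; exact h
  · rw [pbase_cons h]; exact (rstk_head_struct h).2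

/-- The top pending call stays in its own relative pending stack. -/
theorem rstk_self_mem {c i : ℕ} {ps : List ℕ}
    (hpend : rstk lab w 0 i = c :: ps) :
    ∀ m, c < m → m ≤ i → c ∈ rstk lab w c m := by
  have hc0 : c ∈ rstk lab w 0 i := by rw [hpend]; exact List.mem_cons_self
  obtain ⟨-, hci, hcall⟩ := rstk_mem hc0
  intro m hm
  induction m with
  | zero => omega
  | succ m ih =>
      intro hmi
      rcases Nat.eq_or_lt_of_le (Nat.succ_le_of_lt hm) with h | hlt
      · obtain rfl : m = c := by omega
        rw [rstk_succ_call (le_refl _) hcall]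
        exact List.mem_cons_self
      · have hcm : c < m := by omega
        have hmem := ih hcm (by omega)
        have hsplit := rstk_split (x := c) (hc := hmem) m hcm (le_refl m)
        rw [rstk_le (le_refl c)] at hsplit
        rcases hk : symK lab w m with _ | k
        · rw [rstk_succ_none (by omega) hk]; exact hmem
        · cases k
          · rw [rstk_succ_call (by omega) hk]
            exact List.mem_cons_of_mem _ hmem
          · -- ret
            rw [rstk_succ_ret (by omega) hk, hsplit]
            have hne := rstk_split_ret hc0 hcm (by omega) hk
            rcases he : rstk lab w (c + 1) m with _ | ⟨y, t⟩
            · exact absurd he hne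
            · simp
          · rw [rstk_succ_int (by omega) hk]; exact hmem

/-- Relative pending stack based at the top pending call. -/
theorem rstk_at_top {c i : ℕ} {ps : List ℕ}
    (hpend : rstk lab w 0 i = c :: ps) :
    ∀ m, c < m → m ≤ i → rstk lab w c m = rstk lab w (c + 1) m ++ [c] := by
  intro m h1 h2
  have := rstk_split (x := c) (hc := rstk_self_mem hpend m h1 h2) m h1 (le_refl m)
  rwa [rstk_le (le_refl c)] at this

theorem rstk_c_i {c i : ℕ} {ps : List ℕ} (hpend : rstk lab w 0 i = c :: ps) :
    rstk lab w c i = [c] := by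
  have hci : c < i := (rstk_mem (by rw [hpend]; exact List.mem_cons_self :
    c ∈ rstk lab w 0 i)).2.1
  rw [rstk_at_top hpend i hci (le_refl i), (rstk_head_struct hpend).2]
  rfl

theorem hne_base_c {c i : ℕ} {ps : List ℕ} (hpend : rstk lab w 0 i = c :: ps) :
    ∀ m, c ≤ m → m < i + 1 → symK lab w m = some .ret →
      rstk lab w c m ≠ [] := by
  have hc0 : c ∈ rstk lab w 0 i := by rw [hpend]; exact List.mem_cons_self
  obtain ⟨-, hci, hcall⟩ := rstk_mem hc0
  intro m h1 h2 hret
  rcases Nat.eq_or_lt_of_le h1 with rfl | hlt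
  · rw [hcall] at hret; simp at hret
  · rw [rstk_at_top hpend m hlt (by omega)]
    simp

theorem hne_seg {c i : ℕ} {ps : List ℕ} (hpend : rstk lab w 0 i = c :: ps) :
    ∀ m, c + 1 ≤ m → m < i → symK lab w m = some .ret →
      rstk lab w (c + 1) m ≠ [] := by
  have hc0 : c ∈ rstk lab w 0 i := by rw [hpend]; exact List.mem_cons_self
  exact fun m h1 h2 hret => rstk_split_ret hc0 (by omega) h2 hret

theorem rstk_c_succ_i {c i : ℕ} {ps : List ℕ} (hpend : rstk lab w 0 i = c :: ps)
    (hret : symK lab w i = some .ret) : rstk lab w c (i + 1) = [] := by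
  have hci : c < i := (rstk_mem (by rw [hpend]; exact List.mem_cons_self :
    c ∈ rstk lab w 0 i)).2.1
  rw [rstk_succ_ret (by omega) hret, rstk_c_i hpend]
  rfl

/-- Last-step inversion at an internal symbol. -/
theorem mrun_last_int {n a i : ℕ} {c₀ cend : Q × List Γ} {p : A × ℝ}
    (h : MRun lab M w n a c₀ (i + 1) cend) (ha : a ≤ i) (hp : w[i]? = some p)
    (hl : lab p.1 = SymbolKind.int) :
    ∃ q q' γ φ, cend = (q', γ) ∧ MRun lab M w n a c₀ i (q, γ) ∧
      MSat lab w n i φ ∧ q' ∈ M.δint p.1 q φ := by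
  cases h with
  | refl => omega
  | @int i' q q' γ p' φ h hp' hl' hs hd =>
      rw [hp] at hp'
      obtain rfl : p = p' := Option.some.inj hp'
      exact ⟨q, q', γ, φ, rfl, h, hs, hd⟩
  | @call i' q q' γ s p' φ h hp' hl' hs hd =>
      rw [hp] at hp'
      obtain rfl : p = p' := Option.some.inj hp'
      rw [hl] at hl'; simp at hl'
  | @ret i' q q' γ s p' φ h hp' hl' hs hd =>
      rw [hp] at hp'
      obtain rfl : p = p' := Option.some.inj hp'
      rw [hl] at hl'; simp at hl'
  | @retEmpty i' q q' p' φ h hp' hl' hs hd =>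
      rw [hp] at hp'
      obtain rfl : p = p' := Option.some.inj hp'
      rw [hl] at hl'; simp at hl'

/-- Last-step inversion at a call symbol. -/
theorem mrun_last_call {n a i : ℕ} {c₀ cend : Q × List Γ} {p : A × ℝ}
    (h : MRun lab M w n a c₀ (i + 1) cend) (ha : a ≤ i) (hp : w[i]? = some p)
    (hl : lab p.1 = SymbolKind.call) :
    ∃ q q' γ s φ, cend = (q', s :: γ) ∧ MRun lab M w n a c₀ i (q, γ) ∧
      MSat lab w n i φ ∧ (q', s) ∈ M.δcall p.1 q φ := by
  cases h with
  | refl => omega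
  | @int i' q q' γ p' φ h hp' hl' hs hd =>
      rw [hp] at hp'
      obtain rfl : p = p' := Option.some.inj hp'
      rw [hl] at hl'; simp at hl'
  | @call i' q q' γ s p' φ h hp' hl' hs hd =>
      rw [hp] at hp'
      obtain rfl : p = p' := Option.some.inj hp'
      exact ⟨q, q', γ, s, φ, rfl, h, hs, hd⟩
  | @ret i' q q' γ s p' φ h hp' hl' hs hd =>
      rw [hp] at hp'
      obtain rfl : p = p' := Option.some.inj hp'
      rw [hl] at hl'; simp at hl'
  | @retEmpty i' q q' p' φ h hp' hl' hs hd =>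
      rw [hp] at hp'
      obtain rfl : p = p' := Option.some.inj hp'
      rw [hl] at hl'; simp at hl'

/-- Last-step inversion at a return symbol. -/
theorem mrun_last_ret {n a i : ℕ} {c₀ cend : Q × List Γ} {p : A × ℝ}
    (h : MRun lab M w n a c₀ (i + 1) cend) (ha : a ≤ i) (hp : w[i]? = some p)
    (hl : lab p.1 = SymbolKind.ret) :
    (∃ q q' γ s φ, cend = (q', γ) ∧ MRun lab M w n a c₀ i (q, s :: γ) ∧
      MSat lab w n i φ ∧ q' ∈ M.δret p.1 (some s) q φ) ∨
    (∃ q q' φ, cend = (q', []) ∧ MRun lab M w n a c₀ i (q, []) ∧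
      MSat lab w n i φ ∧ q' ∈ M.δret p.1 none q φ) := by
  cases h with
  | refl => omega
  | @int i' q q' γ p' φ h hp' hl' hs hd =>
      rw [hp] at hp'
      obtain rfl : p = p' := Option.some.inj hp'
      rw [hl] at hl'; simp at hl'
  | @call i' q q' γ s p' φ h hp' hl' hs hd =>
      rw [hp] at hp'
      obtain rfl : p = p' := Option.some.inj hp'
      rw [hl] at hl'; simp at hl'
  | @ret i' q q' γ s p' φ h hp' hl' hs hd =>
      rw [hp] at hp'
      obtain rfl : p = p' := Option.some.inj hp'
      exact Or.inl ⟨q, q', γ, s, φ, rfl, h, hs, hd⟩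
  | @retEmpty i' q q' p' φ h hp' hl' hs hd =>
      rw [hp] at hp'
      obtain rfl : p = p' := Option.some.inj hp'
      exact Or.inr ⟨q, q', φ, rfl, h, hs, hd⟩

end SimUtil


/-! ### The combined call–interior–return step -/

section Hop

variable {lab : A → SymbolKind} {M : ECIDPDA A Q Γ} {w : List (A × ℝ)}
variable {Ψ : Set (ClockConstraint A)}

theorem atoms_sub_atomicSet {φ ψ : ClockConstraint A} (hused : φ ∈ M.used)
    (h : ψ ∈ φ.atoms) : ψ ∈ M.atomicSet :=
  Set.mem_biUnion hused h

theorem mcv_pop_pred {i c : ℕ} {p pc : A × ℝ} (hMatch : Matches lab w c i)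
    (hp : w[i]? = some p) (hpc : w[c]? = some pc) {v' : ℝ} :
    MCV lab w (i + 1) c Clock.predStack v' ↔ v' = p.2 - pc.2 := by
  rw [mcv_predStack, clockVal_predStack_take]
  constructor
  · rintro ⟨j, pp, rr, hm, hj, hpp, hrr, rfl⟩
    obtain rfl : i = j := matches_unique_right hMatch hm
    rw [hpc] at hpp; rw [hp] at hrr
    rw [Option.some.inj hpp, Option.some.inj hrr]
  · rintro rfl
    exact ⟨i, pc, p, hMatch, by omega, hpc, hp, rfl⟩

theorem callTruth_iff [Finite A] (ht : IsTimed w)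
    (hΨ : Ψ = {φ | φ ∈ M.atomicSet ∧ Clock.predStack ∉ φ.clocks})
    {i c : ℕ} {ps : List ℕ} {p pc : A × ℝ}
    (hi : i < w.length) (hpend : rstk lab w 0 i = c :: ps)
    (hp : w[i]? = some p) (hl : lab p.1 = SymbolKind.ret)
    (hpc : w[c]? = some pc)
    {φc : ClockConstraint A} (hused : φc ∈ M.used) :
    evalW (callTruth Ψ (Pat lab w Ψ c) (snapOf lab w i Clock.histStack)) φc ↔
      MSat lab w (i + 1) c φc := by
  have hMatch : Matches lab w c i :=
    matches_of_rstk hi (symK_of_pos hp hl) hpend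
  have hsnap : snapOf lab w i Clock.histStack = some (p.2 - pc.2) :=
    snapOf_eq_some.mpr ⟨p, pc, c, hMatch, hp, hpc, rfl⟩
  unfold MSat
  apply evalW_eq_EvalC
  intro ψ hψ
  have hψa : ψ ∈ M.atomicSet := atoms_sub_atomicSet hused hψ
  rcases atoms_shape hψ with ⟨C, τ, rfl⟩ | ⟨C, τ, rfl⟩
  · by_cases hC : C = Clock.predStack
    · subst hC
      rw [show (EvalC (MCV lab w (i + 1) c) (ClockConstraint.le Clock.predStack τ))
          = ∃ v, MCV lab w (i + 1) c Clock.predStack v ∧ v ≤ τ from rfl]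
      unfold callTruth
      rw [hsnap]
      constructor
      · rintro (⟨hmem, -⟩ | ⟨τ', v, hv, hcase⟩)
        · rw [hΨ] at hmem
          exact absurd (by simp [ClockConstraint.clocks]) hmem.2
        · obtain rfl : p.2 - pc.2 = v := Option.some.inj hv
          rcases hcase with ⟨heq, hle⟩ | ⟨heq, -⟩
          · obtain rfl : τ = τ' := by
              injection heq
            exact ⟨p.2 - pc.2, (mcv_pop_pred hMatch hp hpc).mpr rfl, hle⟩
          · exact absurd heq (by simp)
      · rintro ⟨v, hv, hle⟩
        obtain rfl : v = p.2 - pc.2 := (mcv_pop_pred hMatch hp hpc).mp hv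
        exact Or.inr ⟨τ, p.2 - pc.2, rfl, Or.inl ⟨rfl, hle⟩⟩
    · have hnc : Clock.predStack ∉ (ClockConstraint.le C τ).clocks := by
        simp [ClockConstraint.clocks]
        exact fun he => hC he.symm
      have hmemΨ : ClockConstraint.le C τ ∈ Ψ := by
        rw [hΨ]; exact ⟨hψa, hnc⟩
      have : EvalC (MCV lab w (i + 1) c) (ClockConstraint.le C τ)
          ↔ Sat lab w c (ClockConstraint.le C τ) :=
        msat_sat_of_nonpred hnc
      rw [this]
      unfold callTruth
      constructor
      · rintro (⟨hmem, hPat⟩ | ⟨τ', v, hv, hcase⟩)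
        · exact hPat
        · rcases hcase with ⟨heq, -⟩ | ⟨heq, -⟩
          · exact absurd heq (by
              intro he
              injection he with h1 h2
              exact hC h1)
          · exact absurd heq (by simp)
      · intro hSat
        exact Or.inl ⟨hmemΨ, hSat⟩
  · by_cases hC : C = Clock.predStack
    · subst hC
      rw [show (EvalC (MCV lab w (i + 1) c) (ClockConstraint.ge Clock.predStack τ))
          = ∃ v, MCV lab w (i + 1) c Clock.predStack v ∧ τ ≤ v from rfl]
      unfold callTruth
      rw [hsnap]
      constructor
      · rintro (⟨hmem, -⟩ | ⟨τ', v, hv, hcase⟩)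
        · rw [hΨ] at hmem
          exact absurd (by simp [ClockConstraint.clocks]) hmem.2
        · obtain rfl : p.2 - pc.2 = v := Option.some.inj hv
          rcases hcase with ⟨heq, -⟩ | ⟨heq, hle⟩
          · exact absurd heq (by simp)
          · obtain rfl : τ = τ' := by
              injection heq
            exact ⟨p.2 - pc.2, (mcv_pop_pred hMatch hp hpc).mpr rfl, hle⟩
      · rintro ⟨v, hv, hle⟩
        obtain rfl : v = p.2 - pc.2 := (mcv_pop_pred hMatch hp hpc).mp hv
        exact Or.inr ⟨τ, p.2 - pc.2, rfl, Or.inr ⟨rfl, hle⟩⟩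
    · have hnc : Clock.predStack ∉ (ClockConstraint.ge C τ).clocks := by
        simp [ClockConstraint.clocks]
        exact fun he => hC he.symm
      have hmemΨ : ClockConstraint.ge C τ ∈ Ψ := by
        rw [hΨ]; exact ⟨hψa, hnc⟩
      have : EvalC (MCV lab w (i + 1) c) (ClockConstraint.ge C τ)
          ↔ Sat lab w c (ClockConstraint.ge C τ) :=
        msat_sat_of_nonpred hnc
      rw [this]
      unfold callTruth
      constructor
      · rintro (⟨hmem, hPat⟩ | ⟨τ', v, hv, hcase⟩)
        · exact hPat
        · rcases hcase with ⟨heq, -⟩ | ⟨heq, -⟩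
          · exact absurd heq (by simp)
          · exact absurd heq (by
              intro he
              injection he with h1 h2
              exact hC h1)
      · intro hSat
        exact Or.inl ⟨hmemΨ, hSat⟩

theorem hview_seg {c i : ℕ} {ps : List ℕ} (hpend : rstk lab w 0 i = c :: ps) :
    ∀ m, c + 1 ≤ m → m < i → ∀ φ, MSat lab w i m φ ↔ MSat lab w (i + 1) m φ := by
  intro m h1 h2 φ
  refine msat_step_of_nomatch fun hm => ?_
  have h3 := matches_rstk hm 0 (Nat.zero_le _)
  rw [hpend] at h3
  have : c = m := (List.cons.injEq _ _ _ _ ▸ h3).1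
  omega

theorem hop_fwd [Finite A] (ht : IsTimed w)
    (hΨ : Ψ = {φ | φ ∈ M.atomicSet ∧ Clock.predStack ∉ φ.clocks})
    {i c : ℕ} {ps : List ℕ} {p pc : A × ℝ} {x y : Q} {γb γ' : List Γ}
    (hi : i < w.length) (hpend : rstk lab w 0 i = c :: ps)
    (hp : w[i]? = some p) (hl : lab p.1 = SymbolKind.ret)
    (hpc : w[c]? = some pc) (hcall : lab pc.1 = SymbolKind.call)
    (run : MRun lab M w (i + 1) c (x, γb) (i + 1) (y, γ')) :
    γ' = γb ∧ y ∈ stepRetSome M Ψ (snapOf lab w i) p.1 pc.1 (Pat lab w Ψ c)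
      (Rsem lab M w i i) x := by
  have hci : c < i := (rstk_mem (show c ∈ rstk lab w 0 i by
    rw [hpend]; exact List.mem_cons_self)).2.1
  have hretK : symK lab w i = some .ret := symK_of_pos hp hl
  obtain ⟨τ, hγ', hτlen, rel⟩ := mrun_proj run (hne_base_c hpend)
  rw [rstk_c_succ_i hpend hretK] at hτlen
  obtain rfl : τ = [] := List.eq_nil_of_length_eq_zero (by simpa using hτlen)
  simp only [List.nil_append] at hγ'
  obtain ⟨cfgi, r1, r2⟩ := mrun_split rel i (by omega) (by omega)
  have hhei : cfgi.2.length = 1 := by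
    rw [mrun_height r1, rstk_c_i hpend]
    rfl
  rcases mrun_last_ret r2 (le_refl i) hp hl with
    ⟨q, q', γr, s, φr, hEnd, hpre, hsr, hdr⟩ | ⟨q, q', φr, hEnd, hpre, hsr, hdr⟩
  · obtain ⟨rfl, rfl⟩ : q' = y ∧ γr = [] := by
      have h1 := congrArg Prod.fst hEnd
      have h2 := congrArg Prod.snd hEnd
      exact ⟨h1.symm, h2.symm⟩
    have hcfgi : cfgi = (q, [s]) := mrun_same hpre (le_refl i)
    rw [hcfgi] at r1
    obtain ⟨cfg1, r11, r12⟩ := mrun_split r1 (c + 1) (by omega) (by omega)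
    obtain ⟨q0', q₁, γ0, s₁, φc, hcfg1, hpre0, hsc, hdc⟩ :=
      mrun_last_call r11 (le_refl c) hpc hcall
    obtain ⟨rfl, rfl⟩ : x = q0' ∧ γ0 = [] := by
      have := mrun_same hpre0 (le_refl c)
      exact ⟨congrArg Prod.fst this, (congrArg Prod.snd this).symm⟩
    rw [hcfg1] at r12
    obtain ⟨τ₂, hτ₂, hτ₂len, rel2⟩ := mrun_proj r12 (hne_seg hpend)
    rw [(rstk_head_struct hpend).2] at hτ₂len
    obtain rfl : τ₂ = [] := List.eq_nil_of_length_eq_zero (by simpa using hτ₂len)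
    simp only [List.nil_append, List.cons.injEq] at hτ₂
    obtain ⟨rfl, -⟩ := hτ₂
    have hR : (q₁, q) ∈ Rsem lab M w i i := by
      show MRun lab M w i (pbase lab w i) (q₁, []) i (q, [])
      rw [pbase_cons hpend]
      exact mrun_view (fun m h1 h2 φ => (hview_seg hpend m h1 h2 φ).symm) rel2
    have husedc : φc ∈ M.used := Or.inr (Or.inl ⟨pc.1, x, ⟨(q₁, s), hdc⟩⟩)
    have hφc := (callTruth_iff ht hΨ hi hpend hp hl hpc husedc).mpr hsc
    exact ⟨hγ', ⟨φc, q₁, s, q, φr, hφc, hdc, hR, msat_succ_at_self.mp hsr, hdr⟩⟩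
  · exfalso
    have := mrun_same hpre (le_refl i)
    rw [this] at hhei
    simp at hhei

theorem hop_bwd [Finite A] (ht : IsTimed w)
    (hΨ : Ψ = {φ | φ ∈ M.atomicSet ∧ Clock.predStack ∉ φ.clocks})
    {i c : ℕ} {ps : List ℕ} {p pc : A × ℝ} {x y : Q}
    (hi : i < w.length) (hpend : rstk lab w 0 i = c :: ps)
    (hp : w[i]? = some p) (hl : lab p.1 = SymbolKind.ret)
    (hpc : w[c]? = some pc) (hcall : lab pc.1 = SymbolKind.call)
    (hy : y ∈ stepRetSome M Ψ (snapOf lab w i) p.1 pc.1 (Pat lab w Ψ c)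
      (Rsem lab M w i i) x) (γb : List Γ) :
    MRun lab M w (i + 1) c (x, γb) (i + 1) (y, γb) := by
  have hci : c < i := (rstk_mem (show c ∈ rstk lab w 0 i by
    rw [hpend]; exact List.mem_cons_self)).2.1
  obtain ⟨φc, q₁, s, q₂, φr, hec, hdc, hR, hsr, hdr⟩ := hy
  have husedc : φc ∈ M.used := Or.inr (Or.inl ⟨pc.1, x, ⟨(q₁, s), hdc⟩⟩)
  have hsc : MSat lab w (i + 1) c φc :=
    (callTruth_iff ht hΨ hi hpend hp hl hpc husedc).mp hec
  have step1 : MRun lab M w (i + 1) c (x, γb) (c + 1) (q₁, s :: γb) :=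
    MRun.call MRun.refl hpc hcall hsc hdc
  have hrel : MRun lab M w i (c + 1) (q₁, []) i (q₂, []) := by
    have := hR
    rw [Rsem, Set.mem_setOf_eq, pbase_cons hpend] at this
    exact this
  have hrel' : MRun lab M w (i + 1) (c + 1) (q₁, []) i (q₂, []) :=
    mrun_view (hview_seg hpend) hrel
  have lift := mrun_lift hrel' (hne_seg hpend) (s :: γb)
  simp only [List.nil_append] at lift
  have step3 : MRun lab M w (i + 1) i (q₂, s :: γb) (i + 1) (y, γb) :=
    MRun.ret MRun.refl hp hl (msat_succ_at_self.mpr hsr) hdr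
  exact mrun_trans (mrun_trans step1 lift) step3

end Hop


/-! ### The semantic step lemmas -/

section StepLemmas

variable {lab : A → SymbolKind} {M : ECIDPDA A Q Γ} {w : List (A × ℝ)}
variable {Ψ : Set (ClockConstraint A)}

theorem atomicSet_shape {ψ : ClockConstraint A} (h : ψ ∈ M.atomicSet) :
    (∃ C τ, ψ = .le C τ) ∨ (∃ C τ, ψ = .ge C τ) := by
  rw [ECIDPDA.atomicSet] at h
  simp only [Set.mem_iUnion, exists_prop] at h
  obtain ⟨φ, -, hψ⟩ := h
  exact atoms_shape hψ

theorem pat_eq [Finite A]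
    (hΨ : Ψ = {φ | φ ∈ M.atomicSet ∧ Clock.predStack ∉ φ.clocks}) (i : ℕ) :
    {ψ : ↥Ψ | atomEval (snapOf lab w i) ψ.1} = Pat lab w Ψ i := by
  ext ψ
  obtain ⟨ψv, hψv⟩ := ψ
  have hmem : ψv ∈ M.atomicSet ∧ Clock.predStack ∉ ψv.clocks := by
    rw [hΨ] at hψv
    exact hψv
  simp only [Set.mem_setOf_eq, Pat]
  exact atomEval_snap_iff_sat (atomicSet_shape hmem.1) hmem.2

theorem SL_int (ht : IsTimed w) {i : ℕ} {p : A × ℝ}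
    (hp : w[i]? = some p) (hl : lab p.1 = SymbolKind.int) :
    Rsem lab M w (i + 1) (i + 1)
      = comp (Rsem lab M w i i) (stepInt M (snapOf lab w i) p.1) ∧
    Ssem lab M w (i + 1) (i + 1)
      = img (Ssem lab M w i i) (stepInt M (snapOf lab w i) p.1) := by
  have hK := symK_of_pos hp hl
  have hnm : ∀ p', ¬ Matches lab w p' i :=
    fun p' hm => no_match_at_nonret (by rw [hK]; simp) hm
  have hpb : pbase lab w (i + 1) = pbase lab w i := by
    unfold pbase
    rw [rstk_succ_int (Nat.zero_le _) hK]
  constructor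
  · ext pq
    simp only [Rsem, comp, Set.mem_setOf_eq, hpb]
    constructor
    · intro run
      obtain ⟨q, q', γ', φ, hEnd, hpre, hs, hd⟩ :=
        mrun_last_int run (pbase_le i) hp hl
      injection hEnd with h1 h2
      subst h1
      subst h2
      refine ⟨q, ?_, φ, msat_succ_at_self.mp hs, hd⟩
      exact mrun_view (fun m h1 h2 φ => (msat_step_of_nomatch (hnm m)).symm) hpre
    · rintro ⟨q, hRq, φ, hsat, hd⟩
      have run' := mrun_view (fun m h1 h2 φ => msat_step_of_nomatch (hnm m)) hRq
      exact MRun.int run' hp hl (msat_succ_at_self.mpr hsat) hd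
  · ext y
    simp only [Ssem, img, Set.mem_setOf_eq]
    constructor
    · rintro ⟨q₀, h0, γ, run⟩
      obtain ⟨q, q', γ', φ, hEnd, hpre, hs, hd⟩ :=
        mrun_last_int run (Nat.zero_le _) hp hl
      injection hEnd with h1 h2
      subst h1
      subst h2
      refine ⟨q, ⟨q₀, h0, γ, ?_⟩, φ, msat_succ_at_self.mp hs, hd⟩
      exact mrun_view (fun m h1 h2 φ => (msat_step_of_nomatch (hnm m)).symm) hpre
    · rintro ⟨q, ⟨q₀, h0, γ, run⟩, φ, hsat, hd⟩
      have run' := mrun_view (fun m h1 h2 φ => msat_step_of_nomatch (hnm m)) run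
      exact ⟨q₀, h0, γ, MRun.int run' hp hl (msat_succ_at_self.mpr hsat) hd⟩

theorem SL_call [Finite A] (ht : IsTimed w)
    (hΨ : Ψ = {φ | φ ∈ M.atomicSet ∧ Clock.predStack ∉ φ.clocks})
    {i : ℕ} {p : A × ℝ}
    (hp : w[i]? = some p) (hl : lab p.1 = SymbolKind.call) :
    Rsem lab M w (i + 1) (i + 1) = idQ Q ∧
    Ssem lab M w (i + 1) (i + 1)
      = img (Ssem lab M w i i) (stepCallQ M (snapOf lab w i) p.1) ∧
    {ψ : ↥Ψ | atomEval (snapOf lab w i) ψ.1} = Pat lab w Ψ i ∧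
    rstk lab w 0 (i + 1) = i :: rstk lab w 0 i := by
  have hK := symK_of_pos hp hl
  have hnm : ∀ p', ¬ Matches lab w p' i :=
    fun p' hm => no_match_at_nonret (by rw [hK]; simp) hm
  have hrs : rstk lab w 0 (i + 1) = i :: rstk lab w 0 i :=
    rstk_succ_call (Nat.zero_le _) hK
  refine ⟨?_, ?_, pat_eq hΨ i, hrs⟩
  · ext pq
    simp only [Rsem, idQ, Set.mem_setOf_eq, pbase_cons hrs]
    constructor
    · intro run
      have := mrun_same run (le_refl _)
      exact (congrArg Prod.fst this)
    · intro hpq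
      have : (pq.1, ([] : List Γ)) = (pq.2, ([] : List Γ)) := by rw [hpq]
      rw [this]
      exact MRun.refl
  · ext y
    simp only [Ssem, img, Set.mem_setOf_eq]
    constructor
    · rintro ⟨q₀, h0, γ, run⟩
      obtain ⟨q, q', γ', s, φ, hEnd, hpre, hs, hd⟩ :=
        mrun_last_call run (Nat.zero_le _) hp hl
      injection hEnd with h1 h2
      subst h1
      subst h2
      refine ⟨q, ⟨q₀, h0, γ', ?_⟩, φ, s, msat_succ_at_self.mp hs, hd⟩
      exact mrun_view (fun m h1 h2 φ => (msat_step_of_nomatch (hnm m)).symm) hpre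
    · rintro ⟨q, ⟨q₀, h0, γ, run⟩, φ, s, hsat, hd⟩
      have run' := mrun_view (fun m h1 h2 φ => msat_step_of_nomatch (hnm m)) run
      exact ⟨q₀, h0, s :: γ, MRun.call run' hp hl (msat_succ_at_self.mpr hsat) hd⟩

theorem SL_retNone (ht : IsTimed w) {i : ℕ} {p : A × ℝ}
    (hp : w[i]? = some p) (hl : lab p.1 = SymbolKind.ret)
    (hnil : rstk lab w 0 i = []) :
    Rsem lab M w (i + 1) (i + 1)
      = comp (Rsem lab M w i i) (stepRetNone M (snapOf lab w i) p.1) ∧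
    Ssem lab M w (i + 1) (i + 1)
      = img (Ssem lab M w i i) (stepRetNone M (snapOf lab w i) p.1) ∧
    rstk lab w 0 (i + 1) = [] := by
  have hK := symK_of_pos hp hl
  have hnm : ∀ p', ¬ Matches lab w p' i :=
    fun p' hm => no_match_at_empty hnil hm
  have hrs : rstk lab w 0 (i + 1) = [] := by
    rw [rstk_succ_ret (Nat.zero_le _) hK, hnil]
    rfl
  have hpb1 : pbase lab w (i + 1) = 0 := pbase_nil hrs
  have hpb0 : pbase lab w i = 0 := pbase_nil hnil
  refine ⟨?_, ?_, hrs⟩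
  · ext pq
    simp only [Rsem, comp, Set.mem_setOf_eq, hpb1, hpb0]
    constructor
    · intro run
      rcases mrun_last_ret run (Nat.zero_le _) hp hl with
        ⟨q, q', γr, s, φ, hEnd, hpre, hs, hd⟩ | ⟨q, q', φ, hEnd, hpre, hs, hd⟩
      · exfalso
        have := mrun_height hpre
        rw [hnil] at this
        simp at this
      · injection hEnd with h1 h2
        subst h1
        refine ⟨q, ?_, φ, msat_succ_at_self.mp hs, hd⟩
        exact mrun_view (fun m h1 h2 φ => (msat_step_of_nomatch (hnm m)).symm) hpre
    · rintro ⟨q, hRq, φ, hsat, hd⟩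
      have run' := mrun_view (fun m h1 h2 φ => msat_step_of_nomatch (hnm m)) hRq
      exact MRun.retEmpty run' hp hl (msat_succ_at_self.mpr hsat) hd
  · ext y
    simp only [Ssem, img, Set.mem_setOf_eq]
    constructor
    · rintro ⟨q₀, h0, γ, run⟩
      rcases mrun_last_ret run (Nat.zero_le _) hp hl with
        ⟨q, q', γr, s, φ, hEnd, hpre, hs, hd⟩ | ⟨q, q', φ, hEnd, hpre, hs, hd⟩
      · exfalso
        have := mrun_height hpre
        rw [hnil] at this
        simp at this
      · injection hEnd with h1 h2
        subst h1
        refine ⟨q, ⟨q₀, h0, [], ?_⟩, φ, msat_succ_at_self.mp hs, hd⟩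
        exact mrun_view (fun m h1 h2 φ => (msat_step_of_nomatch (hnm m)).symm) hpre
    · rintro ⟨q, ⟨q₀, h0, γ, run⟩, φ, hsat, hd⟩
      obtain rfl : γ = [] := by
        have := mrun_height run
        rw [hnil] at this
        exact List.eq_nil_of_length_eq_zero (by simpa using this)
      have run' := mrun_view (fun m h1 h2 φ => msat_step_of_nomatch (hnm m)) run
      exact ⟨q₀, h0, [], MRun.retEmpty run' hp hl (msat_succ_at_self.mpr hsat) hd⟩

theorem SL_retSome [Finite A] (ht : IsTimed w)
    (hΨ : Ψ = {φ | φ ∈ M.atomicSet ∧ Clock.predStack ∉ φ.clocks})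
    {i c : ℕ} {ps : List ℕ} {p pc : A × ℝ}
    (hi : i < w.length) (hpend : rstk lab w 0 i = c :: ps)
    (hp : w[i]? = some p) (hl : lab p.1 = SymbolKind.ret)
    (hpc : w[c]? = some pc) (hcall : lab pc.1 = SymbolKind.call) :
    Rsem lab M w (i + 1) (i + 1)
      = comp (Rsem lab M w c c) (stepRetSome M Ψ (snapOf lab w i) p.1 pc.1
          (Pat lab w Ψ c) (Rsem lab M w i i)) ∧
    Ssem lab M w (i + 1) (i + 1)
      = img (Ssem lab M w c c) (stepRetSome M Ψ (snapOf lab w i) p.1 pc.1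
          (Pat lab w Ψ c) (Rsem lab M w i i)) ∧
    rstk lab w 0 (i + 1) = ps := by
  have hK := symK_of_pos hp hl
  have hci : c < i := (rstk_mem (show c ∈ rstk lab w 0 i by
    rw [hpend]; exact List.mem_cons_self)).2.1
  have hrs : rstk lab w 0 (i + 1) = ps := by
    rw [rstk_succ_ret (Nat.zero_le _) hK, hpend]
    rfl
  have hps : rstk lab w 0 c = ps := (rstk_head_struct hpend).1.symm
  have hpb : pbase lab w (i + 1) = pbase lab w c := by
    unfold pbase
    rw [hrs, hps]
  have hviewc : ∀ m, m < c → ∀ φ,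
      MSat lab w (i + 1) m φ ↔ MSat lab w c m φ :=
    fun m h2 φ => (msat_call_to_pop hpend h2).symm
  refine ⟨?_, ?_, hrs⟩
  · ext pq
    simp only [Rsem, comp, Set.mem_setOf_eq, hpb]
    constructor
    · intro run
      obtain ⟨cfgc, r1, r2⟩ := mrun_split run c (pbase_le c) (by omega)
      obtain ⟨qc, rfl⟩ : ∃ qc, cfgc = (qc, []) := by
        have h1 := mrun_height r1
        rw [rstk_pbase c] at h1
        exact ⟨cfgc.1, Prod.ext rfl (List.eq_nil_of_length_eq_zero (by simpa using h1))⟩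
      obtain ⟨-, hy⟩ := hop_fwd ht hΨ hi hpend hp hl hpc hcall r2
      exact ⟨qc, mrun_view (fun m _ h2 φ => hviewc m h2 φ) r1, hy⟩
    · rintro ⟨qc, hRc, hy⟩
      have r1 : MRun lab M w (i + 1) (pbase lab w c) (pq.1, []) c (qc, []) :=
        mrun_view (fun m _ h2 φ => (hviewc m h2 φ).symm) hRc
      exact mrun_trans r1 (hop_bwd ht hΨ hi hpend hp hl hpc hcall hy [])
  · ext y
    simp only [Ssem, img, Set.mem_setOf_eq]
    constructor
    · rintro ⟨q₀, h0, γ, run⟩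
      obtain ⟨cfgc, r1, r2⟩ := mrun_split run c (Nat.zero_le _) (by omega)
      obtain ⟨qc, γc, rfl⟩ : ∃ qc γc, cfgc = (qc, γc) := ⟨cfgc.1, cfgc.2, rfl⟩
      obtain ⟨rfl, hy⟩ := hop_fwd ht hΨ hi hpend hp hl hpc hcall r2
      exact ⟨qc, ⟨q₀, h0, γ, mrun_view (fun m _ h2 φ => hviewc m h2 φ) r1⟩, hy⟩
    · rintro ⟨qc, ⟨q₀, h0, γc, runc⟩, hy⟩
      have r1 : MRun lab M w (i + 1) 0 (q₀, []) c (qc, γc) :=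
        mrun_view (fun m _ h2 φ => (hviewc m h2 φ).symm) runc
      exact ⟨q₀, h0, γc,
        mrun_trans r1 (hop_bwd ht hΨ hi hpend hp hl hpc hcall hy γc)⟩

theorem Rsem_zero : Rsem lab M w 0 0 = idQ Q := by
  ext pq
  simp only [Rsem, idQ, Set.mem_setOf_eq, pbase_nil (rstk_le (le_refl 0))]
  constructor
  · intro run
    exact congrArg Prod.fst (mrun_same run (le_refl 0))
  · intro hpq
    have : (pq.1, ([] : List Γ)) = (pq.2, ([] : List Γ)) := by rw [hpq]
    rw [this]
    exact MRun.refl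

theorem Ssem_zero : Ssem lab M w 0 0 = M.init := by
  ext q
  simp only [Ssem, Set.mem_setOf_eq]
  constructor
  · rintro ⟨q₀, h0, γ, run⟩
    have := mrun_same run (le_refl 0)
    obtain rfl : q₀ = q := congrArg Prod.fst this
    exact h0
  · intro hq
    exact ⟨q, hq, [], MRun.refl⟩

end StepLemmas


/-! ### The main invariant -/

section Main

variable {lab : A → SymbolKind} {M : ECIDPDA A Q Γ} {w : List (A × ℝ)}
variable {Ψ : Set (ClockConstraint A)}

theorem lt_len_of_getElem {i : ℕ} {p : A × ℝ} (hp : w[i]? = some p) :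
    i < w.length := by
  by_contra h
  simp [List.getElem?_eq_none (le_of_not_gt h)] at hp

theorem breach_iff [Finite A] (ht : IsTimed w)
    (hΨ : Ψ = {φ | φ ∈ M.atomicSet ∧ Clock.predStack ∉ φ.clocks}) :
    ∀ i, i ≤ w.length → ∀ cfg, Reach lab (BAut M Ψ lab) w i cfg ↔
      (cfg.1 = (Rsem lab M w i i, Ssem lab M w i i) ∧
        List.Forall₂ (EntryOK lab M w Ψ) (rstk lab w 0 i) cfg.2) := by
  intro i
  induction i with
  | zero =>
      intro _ cfg
      rw [rstk_le (le_refl 0), Rsem_zero, Ssem_zero]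
      constructor
      · intro h
        cases h with
        | start hq =>
            simp only [BAut, Set.mem_singleton_iff] at hq
            exact ⟨hq, List.Forall₂.nil⟩
      · rintro ⟨h1, h2⟩
        obtain ⟨bq, st⟩ := cfg
        cases h2
        simp only at h1
        subst h1
        exact Reach.start (by simp [BAut])
  | succ i IH =>
      intro hlen cfg
      have hilen : i < w.length := by omega
      have hple : i ≤ w.length := by omega
      constructor
      · -- forward: invert the last step of the B-run
        intro h
        cases h with
        | @int _ q q' γ p φ h hp hl hs hd =>
            obtain ⟨σ, rfl, rfl⟩ := hd
            have hσ : ∀ C ∈ clockList A, σ C = snapOf lab w i C :=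
              (sat_mkφ ht).mp hs
            obtain ⟨hq1, hq2⟩ := ((IH hple (q, γ)).mp h)
            simp only at hq1
            subst hq1
            obtain ⟨hR, hS⟩ := SL_int (M := M) ht hp hl
            constructor
            · simp only
              rw [stepInt_congr hσ, hR, hS]
            · rw [rstk_succ_int (Nat.zero_le _) (symK_of_pos hp hl)]
              exact hq2
        | @call _ q q' γ s p φ h hp hl hs hd =>
            obtain ⟨ha, σ, rfl, hx⟩ := hd
            injection hx with hx1 hx2
            subst hx1
            subst hx2
            have hσ : ∀ C ∈ clockList A, σ C = snapOf lab w i C :=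
              (sat_mkφ ht).mp hs
            obtain ⟨hq1, hq2⟩ := ((IH hple (q, γ)).mp h)
            simp only at hq1
            subst hq1
            obtain ⟨hR, hS, hPat, hrs⟩ := SL_call (M := M) ht hΨ hp hl
            constructor
            · simp only
              rw [stepCallQ_congr hσ, hR, hS]
            · rw [hrs]
              refine List.Forall₂.cons ?_ hq2
              refine ⟨p, hp, hl, ?_⟩
              simp only
              rw [atomSet_congr hσ, hPat]
        | @ret _ q q' γ s p φ h hp hl hs hd =>
            obtain ⟨σ, rfl, rfl⟩ := hd
            have hσ : ∀ C ∈ clockList A, σ C = snapOf lab w i C :=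
              (sat_mkφ ht).mp hs
            obtain ⟨hq1, hq2⟩ := ((IH hple (q, s :: γ)).mp h)
            simp only at hq1
            subst hq1
            obtain ⟨c, ps, hce, hforall, hpend⟩ :=
              List.forall₂_cons_right_iff.mp hq2
            obtain ⟨pc, hpc, hcall, rfl⟩ := hce
            obtain ⟨hR, hS, hrs⟩ :=
              SL_retSome (M := M) ht hΨ hilen hpend hp hl hpc hcall
            constructor
            · simp only
              rw [stepRetSome_congr hσ, hR, hS]
            · rw [hrs]
              exact hforall
        | @retEmpty _ q q' p φ h hp hl hs hd =>
            obtain ⟨σ, rfl, rfl⟩ := hd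
            have hσ : ∀ C ∈ clockList A, σ C = snapOf lab w i C :=
              (sat_mkφ ht).mp hs
            obtain ⟨hq1, hq2⟩ := ((IH hple (q, [])).mp h)
            simp only at hq1
            subst hq1
            have hnil : rstk lab w 0 i = [] := List.forall₂_nil_right_iff.mp hq2
            obtain ⟨hR, hS, hrs⟩ := SL_retNone (M := M) ht hp hl hnil
            constructor
            · simp only
              rw [stepRetNone_congr hσ, hR, hS]
            · rw [hrs]
              exact List.Forall₂.nil
      · -- backward: construct the step
        obtain ⟨bq, st⟩ := cfg
        rintro ⟨h1, h2⟩
        simp only at h1 h2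
        subst h1
        have hp : w[i]? = some w[i] := List.getElem?_eq_getElem hilen
        have hsat : Sat lab w i (mkφ (snapOf lab w i)) :=
          (sat_mkφ ht).mpr fun C _ => rfl
        rcases hk : lab w[i].1 with _ | _ | _
        · -- call
          obtain ⟨hR, hS, hPat, hrs⟩ := SL_call (M := M) ht hΨ hp hk
          rw [hrs] at h2
          obtain ⟨e, rest, hce, hforall, rfl⟩ :=
            List.forall₂_cons_left_iff.mp h2
          obtain ⟨pc, hpc, hcall, rfl⟩ := hce
          rw [hp] at hpc
          obtain rfl : w[i] = pc := Option.some.inj hpc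
          have hreach := (IH hple ((Rsem lab M w i i, Ssem lab M w i i),
            rest)).mpr ⟨rfl, hforall⟩
          refine Reach.call hreach hp hk hsat ?_
          refine ⟨hk, snapOf lab w i, rfl, ?_⟩
          rw [hR, hS, ← hPat]
        · -- ret
          rcases hpd : rstk lab w 0 i with _ | ⟨c, ps⟩
          · -- unmatched return
            obtain ⟨hR, hS, hrs⟩ := SL_retNone (M := M) ht hp hk hpd
            rw [hrs] at h2
            have hst : st = [] := by cases h2; rfl
            subst hst
            have hreach := (IH hple ((Rsem lab M w i i, Ssem lab M w i i),
              [])).mpr ⟨rfl, by rw [hpd]; exact List.Forall₂.nil⟩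
            refine Reach.retEmpty hreach hp hk hsat ?_
            exact ⟨snapOf lab w i, rfl, by rw [hR, hS]⟩
          · -- matched return
            have hclen : c < w.length := by
              have := (rstk_mem (show c ∈ rstk lab w 0 i by
                rw [hpd]; exact List.mem_cons_self)).2.1
              omega
            have hpc : w[c]? = some w[c] := List.getElem?_eq_getElem hclen
            have hcall : lab w[c].1 = SymbolKind.call := by
              have hm : c ∈ rstk lab w 0 i := by
                rw [hpd]; exact List.mem_cons_self
              have := (rstk_mem hm).2.2
              obtain ⟨pp, hpp, hk'⟩ := symK_eq_some.mp this
              rw [hpc] at hpp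
              rw [← Option.some.inj hpp] at hk'
              exact hk'
            obtain ⟨hR, hS, hrs⟩ :=
              SL_retSome (M := M) ht hΨ hilen hpd hp hk hpc hcall
            rw [hrs] at h2
            have hreach := (IH hple ((Rsem lab M w i i, Ssem lab M w i i),
              ((Rsem lab M w c c, Ssem lab M w c c, ⟨w[c].1, hcall⟩,
                Pat lab w Ψ c) :: st))).mpr ⟨rfl, by
                  rw [hpd]
                  exact List.Forall₂.cons ⟨w[c], hpc, hcall, rfl⟩ h2⟩
            refine Reach.ret hreach hp hk hsat ?_
            exact ⟨snapOf lab w i, rfl, by rw [hR, hS]⟩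
        · -- int
          obtain ⟨hR, hS⟩ := SL_int (M := M) ht hp hk
          have hrs := rstk_succ_int (Nat.zero_le _) (symK_of_pos hp hk)
          rw [hrs] at h2
          have hreach := (IH hple ((Rsem lab M w i i, Ssem lab M w i i),
            st)).mpr ⟨rfl, h2⟩
          refine Reach.int hreach hp hk hsat ?_
          exact ⟨snapOf lab w i, rfl, by rw [hR, hS]⟩

end Main


/-! ### Determinism, clocks, and acceptance of `BAut` -/

section Final

variable {lab : A → SymbolKind} {M : ECIDPDA A Q Γ} {w : List (A × ℝ)}
variable {Ψ : Set (ClockConstraint A)}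

theorem baut_det [Finite A] : ECIDPDA.Deterministic lab (BAut M Ψ lab) := by
  refine ⟨⟨(idQ Q, M.init), rfl⟩, ?_, ?_, ?_, ?_, ?_, ?_⟩
  · -- δint subsingleton
    rintro a q φ x₁ ⟨σ₁, hφ₁, rfl⟩ x₂ ⟨σ₂, hφ₂, rfl⟩
    have hσ := mkφ_inj (hφ₁ ▸ hφ₂)
    rw [stepInt_congr hσ]
  · -- δcall subsingleton
    rintro a q φ x₁ ⟨ha₁, σ₁, hφ₁, rfl⟩ x₂ ⟨ha₂, σ₂, hφ₂, rfl⟩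
    have hσ := mkφ_inj (hφ₁ ▸ hφ₂)
    rw [stepCallQ_congr hσ, atomSet_congr hσ]
  · -- δret subsingleton
    rintro a s q φ
    cases s with
    | none =>
        rintro x₁ ⟨σ₁, hφ₁, rfl⟩ x₂ ⟨σ₂, hφ₂, rfl⟩
        have hσ := mkφ_inj (hφ₁ ▸ hφ₂)
        rw [stepRetNone_congr hσ]
    | some e =>
        rintro x₁ ⟨σ₁, hφ₁, rfl⟩ x₂ ⟨σ₂, hφ₂, rfl⟩
        have hσ := mkφ_inj (hφ₁ ▸ hφ₂)
        rw [stepRetSome_congr hσ]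
  · -- δint exclusivity
    rintro a q φ φ' hne ⟨x, σ, hφ, -⟩ ⟨x', σ', hφ', -⟩ w' i ht hi ⟨hs, hs'⟩
    subst hφ; subst hφ'
    apply hne
    have h1 := (sat_mkφ ht).mp hs
    have h2 := (sat_mkφ ht).mp hs'
    exact mkφ_congr fun C hC => (h1 C hC).trans (h2 C hC).symm
  · -- δcall exclusivity
    rintro a q φ φ' hne ⟨x, ha, σ, hφ, -⟩ ⟨x', ha', σ', hφ', -⟩ w' i ht hi ⟨hs, hs'⟩
    subst hφ; subst hφ'
    apply hne
    have h1 := (sat_mkφ ht).mp hs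
    have h2 := (sat_mkφ ht).mp hs'
    exact mkφ_congr fun C hC => (h1 C hC).trans (h2 C hC).symm
  · -- δret exclusivity
    rintro a s q φ φ' hne hne1 hne2 w' i ht hi ⟨hs, hs'⟩
    apply hne
    have hφ : ∃ σ, φ = mkφ σ := by
      obtain ⟨x, hx⟩ := hne1
      cases s with
      | none => obtain ⟨σ, hφ, -⟩ := hx; exact ⟨σ, hφ⟩
      | some e => obtain ⟨σ, hφ, -⟩ := hx; exact ⟨σ, hφ⟩
    have hφ' : ∃ σ, φ' = mkφ σ := by
      obtain ⟨x, hx⟩ := hne2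
      cases s with
      | none => obtain ⟨σ, hφ', -⟩ := hx; exact ⟨σ, hφ'⟩
      | some e => obtain ⟨σ, hφ', -⟩ := hx; exact ⟨σ, hφ'⟩
    obtain ⟨σ, rfl⟩ := hφ
    obtain ⟨σ', rfl⟩ := hφ'
    have h1 := (sat_mkφ ht).mp hs
    have h2 := (sat_mkφ ht).mp hs'
    exact mkφ_congr fun C hC => (h1 C hC).trans (h2 C hC).symm

theorem baut_used [Finite A] :
    ∀ φ ∈ (BAut M Ψ lab).used, Clock.predStack ∉ φ.clocks := by
  intro φ hφ
  have : ∃ σ : Clock A → Option ℝ, φ = mkφ σ := by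
    rcases hφ with ⟨a, q, x, σ, hφ, -⟩ | ⟨a, q, x, ha, σ, hφ, -⟩ | ⟨a, s, q, x, hx⟩
    · exact ⟨σ, hφ⟩
    · exact ⟨σ, hφ⟩
    · cases s with
      | none => obtain ⟨σ, hφ, -⟩ := hx; exact ⟨σ, hφ⟩
      | some e => obtain ⟨σ, hφ, -⟩ := hx; exact ⟨σ, hφ⟩
  obtain ⟨σ, rfl⟩ := this
  exact mkφ_clocks

theorem stack_exists [Finite A] :
    ∀ l : List ℕ, (∀ c ∈ l, c < w.length ∧ symK lab w c = some .call) →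
      ∃ st, List.Forall₂ (EntryOK lab M w Ψ) l st := by
  intro l
  induction l with
  | nil => intro _; exact ⟨[], List.Forall₂.nil⟩
  | cons c l ih =>
      intro h
      obtain ⟨st, hst⟩ := ih fun c' hc' => h c' (List.mem_cons_of_mem _ hc')
      obtain ⟨hlt, hK⟩ := h c (List.mem_cons_self)
      obtain ⟨p, hp, hcall⟩ := symK_eq_some.mp hK
      exact ⟨(Rsem lab M w c c, Ssem lab M w c c, ⟨p.1, hcall⟩,
        Pat lab w Ψ c) :: st,
        List.Forall₂.cons ⟨p, hp, hcall, rfl⟩ hst⟩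

theorem baut_accepts [Finite A] (ht : IsTimed w)
    (hΨ : Ψ = {φ | φ ∈ M.atomicSet ∧ Clock.predStack ∉ φ.clocks}) :
    ECIDPDA.Accepts lab (BAut M Ψ lab) w ↔ ECIDPDA.Accepts lab M w := by
  constructor
  · rintro ⟨q, γ, hre, hfin⟩
    obtain ⟨h1, -⟩ := (breach_iff ht hΨ w.length (le_refl _) (q, γ)).mp hre
    simp only at h1
    rw [h1] at hfin
    obtain ⟨qm, hqm, hqf⟩ := hfin
    obtain ⟨q₀, h0, γm, run⟩ := hqm
    exact ⟨qm, γm, reach_iff_mrun.mpr ⟨q₀, h0, run⟩, hqf⟩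
  · rintro ⟨qm, γm, hre, hfin⟩
    obtain ⟨q₀, h0, run⟩ := reach_iff_mrun.mp hre
    obtain ⟨st, hst⟩ := stack_exists (Ψ := Ψ) (rstk lab w 0 w.length)
      (fun c hc => ⟨(rstk_mem hc).2.1, (rstk_mem hc).2.2⟩)
    have hreach := (breach_iff ht hΨ w.length (le_refl _)
      ((Rsem lab M w w.length w.length, Ssem lab M w w.length w.length),
        st)).mpr ⟨rfl, hst⟩
    exact ⟨_, st, hreach, ⟨qm, ⟨q₀, h0, γm, run⟩, hfin⟩⟩

end Final

end ECDet

/-- **Improved determinization, eliminating the stack prediction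
clock.**  Let `M` be a nondeterministic ECIDPDA, let `Ψ₀` be the set of
atomic stack prediction constraints (those referring to the stack
prediction clock `▷s`) used in its transitions, and let `Ψ` be the set
of all other atomic constraints used in its transitions.  Then there
exists a deterministic ECIDPDA `B` with set of states `2^{Q×Q} × 2^Q`
and pushdown alphabet `2^{Q×Q} × 2^Q × Σ₊₁ × 2^Ψ`, which never uses the
stack prediction clock `▷s` in any of its clock constraints, and which
recognizes the same set of timed strings as `M`. -/
theorem ecidpda_determinization_no_stack_prediction
    {A Q Γ : Type} [Finite A] [Finite Q] [Finite Γ]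
    (lab : A → SymbolKind) (M : ECIDPDA A Q Γ) (hfin : M.used.Finite)
    (Ψ₀ Ψ : Set (ClockConstraint A))
    (hΨ₀ : Ψ₀ = {φ | φ ∈ M.atomicSet ∧ Clock.predStack ∈ φ.clocks})
    (hΨ : Ψ = {φ | φ ∈ M.atomicSet ∧ Clock.predStack ∉ φ.clocks}) :
    ∃ B : ECIDPDA A (Set (Q × Q) × Set Q)
        (Set (Q × Q) × Set Q × {a : A // lab a = SymbolKind.call} × Set (↥Ψ)),
      ECIDPDA.Deterministic lab B ∧
      (∀ φ ∈ B.used, Clock.predStack ∉ φ.clocks) ∧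
      (∀ w : List (A × ℝ), IsTimed w →
        (ECIDPDA.Accepts lab B w ↔ ECIDPDA.Accepts lab M w)) := by
  exact ⟨ECDet.BAut M Ψ lab, ECDet.baut_det, ECDet.baut_used,
    fun w ht => ECDet.baut_accepts ht hΨ⟩
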